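/- arXiv:1703.07259 — 3 statements merged into one kernel-verified Lean document; each statement's English description precedes it below -/
import Mathlib

section
/- Define the pathwise Kabanov–Skorohod integral $\delta(\Phi) := \int_E \varepsilon_x^-\Phi(x)\,N(dx) - \int_E \Phi(x)\,\mu(dx)$ for $\Phi \in L^1(\Omega\times E;H)$. Then for all $F \in L^\infty(\Omega;H)$ and $\Phi \in L^1(\Omega\times E;H)$ the duality formula $\mathbb{E}\langle F, \delta(\Phi)\rangle = \mathbb{E}\int_E \langle D_x F, \Phi(x)\rangle\,\mu(dx)$ holds. -/
open MeasureTheory Filter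
open scoped ENNReal RealInnerProductSpace

-- Removal of a point mass: `η \ δ_x = η - δ_x` if `δ_x ≤ η`, and `η` otherwise.
open scoped Classical in
noncomputable def rmPt {E : Type*} [MeasurableSpace E] (η : Measure E) (x : E) : Measure E :=
  if Measure.dirac x ≤ η then η - Measure.dirac x else η

/-- **Mecke's formula** (add-one form). -/
def MeckeAdd {Ω E : Type*} [MeasurableSpace Ω] [MeasurableSpace E]
    (P : Measure Ω) (μ : Measure E) (N : Ω → Measure E) : Prop :=
  ∀ f : Measure E → E → ℝ≥0∞, Measurable (Function.uncurry f) →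
    ∫⁻ ω, ∫⁻ x, f (N ω) x ∂(N ω) ∂P
      = ∫⁻ ω, ∫⁻ x, f (N ω + Measure.dirac x) x ∂μ ∂P

/-- **Mecke's formula** (remove-one form). -/
def MeckeSub {Ω E : Type*} [MeasurableSpace Ω] [MeasurableSpace E]
    (P : Measure Ω) (μ : Measure E) (N : Ω → Measure E) : Prop :=
  ∀ f : Measure E → E → ℝ≥0∞, Measurable (Function.uncurry f) →
    ∫⁻ ω, ∫⁻ x, f (rmPt (N ω) x) x ∂(N ω) ∂P
      = ∫⁻ ω, ∫⁻ x, f (N ω) x ∂μ ∂P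


open Function

section CG

/-- Any measurable set w.r.t. an `iSup` σ-algebra is measurable w.r.t. the `iSup`
over a countable subfamily. -/
theorem measurableSet_iSup_countable {α ι : Type*} {m : ι → MeasurableSpace α} {S : Set α}
    (hS : MeasurableSet[⨆ i, m i] S) :
    ∃ c : Set ι, c.Countable ∧ MeasurableSet[⨆ i ∈ c, m i] S := by
  rw [MeasurableSpace.measurableSet_iSup] at hS
  induction hS with
  | basic u hu =>
      obtain ⟨i, hi⟩ := hu
      have hle : m i ≤ ⨆ j ∈ ({i} : Set ι), m j :=
        le_iSup₂ (f := fun j (_ : j ∈ ({i} : Set ι)) => m j) i rfl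
      exact ⟨{i}, Set.countable_singleton i, hle u hi⟩
  | empty => exact ⟨∅, Set.countable_empty, @MeasurableSet.empty _ (⨆ i ∈ (∅ : Set ι), m i)⟩
  | compl u _ ih =>
      obtain ⟨c, hc, h⟩ := ih
      exact ⟨c, hc, h.compl⟩
  | iUnion v _ ih =>
      choose c hc h using ih
      refine ⟨⋃ n, c n, Set.countable_iUnion hc, MeasurableSet.iUnion fun n => ?_⟩
      have hle : (⨆ i ∈ c n, m i) ≤ ⨆ i ∈ ⋃ k, c k, m i := by
        refine iSup₂_le fun i hi => le_iSup₂ (f := fun i (_ : i ∈ ⋃ k, c k) => m i) i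
          (Set.mem_iUnion.2 ⟨n, hi⟩)
      exact hle _ (h n)

end CG

section Factor

variable {E : Type*} [MeasurableSpace E]

/-- The product σ-algebra on `Measure E × E` as an `iSup`. -/
theorem measure_prod_eq_iSup :
    (inferInstance : MeasurableSpace (Measure E × E)) =
      ⨆ j : Option {s : Set E // MeasurableSet s},
        (Option.elim j (MeasurableSpace.comap Prod.snd inferInstance)
          fun s => MeasurableSpace.comap (fun p : Measure E × E => p.1 s.1)
            (borel ℝ≥0∞)) := by
  rw [iSup_option]
  have h1 : (inferInstance : MeasurableSpace (Measure E × E)) =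
      MeasurableSpace.comap Prod.fst (inferInstance : MeasurableSpace (Measure E))
        ⊔ MeasurableSpace.comap Prod.snd (inferInstance : MeasurableSpace E) := rfl
  rw [h1]
  rw [sup_comm]
  congr 1
  show MeasurableSpace.comap Prod.fst
      (⨆ (s : Set E) (_ : MeasurableSet s), (borel ℝ≥0∞).comap fun μ : Measure E => μ s) = _
  rw [MeasurableSpace.comap_iSup]
  simp_rw [MeasurableSpace.comap_iSup, MeasurableSpace.comap_comp]
  rw [iSup_subtype']
  rfl

end Factor

section Factor2

variable {E : Type*} [MeasurableSpace E]

theorem exists_countable_coords {S : Set (Measure E × E)} (hS : MeasurableSet S) :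
    ∃ T : Set (Set E), T.Countable ∧ (∀ t ∈ T, MeasurableSet t) ∧
      MeasurableSet[(⨆ t ∈ T, MeasurableSpace.comap (fun p : Measure E × E => p.1 t)
          (borel ℝ≥0∞)) ⊔ MeasurableSpace.comap Prod.snd inferInstance] S := by
  have hS2 : MeasurableSet[⨆ j : Option {s : Set E // MeasurableSet s},
      (Option.elim j (MeasurableSpace.comap Prod.snd inferInstance)
        fun s => MeasurableSpace.comap (fun p : Measure E × E => p.1 s.1)
          (borel ℝ≥0∞))] S := by
    rw [← measure_prod_eq_iSup]; exact hS
  obtain ⟨c, hc, h⟩ := measurableSet_iSup_countable hS2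
  refine ⟨Subtype.val '' (Option.some ⁻¹' c), (hc.preimage (Option.some_injective _)).image _,
    ?_, ?_⟩
  · rintro t ⟨s, _, rfl⟩; exact s.2
  · have hle : (⨆ j ∈ c, (Option.elim j (MeasurableSpace.comap Prod.snd inferInstance)
        fun s => MeasurableSpace.comap (fun p : Measure E × E => p.1 s.1) (borel ℝ≥0∞)))
        ≤ (⨆ t ∈ Subtype.val '' (Option.some ⁻¹' c),
            MeasurableSpace.comap (fun p : Measure E × E => p.1 t) (borel ℝ≥0∞))
          ⊔ MeasurableSpace.comap Prod.snd inferInstance := by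
      refine iSup₂_le (fun j hj => ?_)
      match j with
      | none => exact le_sup_right
      | some s =>
          refine le_trans ?_ le_sup_left
          exact le_iSup₂ (f := fun t (_ : t ∈ Subtype.val '' (Option.some ⁻¹' c)) =>
            MeasurableSpace.comap (fun p : Measure E × E => p.1 t) (borel ℝ≥0∞)) s.1
            ⟨s, hj, rfl⟩
    exact hle _ h

end Factor2

section DD

/-- Doob–Dynkin lemma for `ℝ≥0∞`-valued functions. -/
theorem exists_factor_ennreal {α γ : Type*} [mγ : MeasurableSpace γ] {φ : α → γ}
    {ξ : α → ℝ≥0∞} (hξ : Measurable[mγ.comap φ] ξ) :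
    ∃ Ξ : γ → ℝ≥0∞, Measurable Ξ ∧ ∀ a, Ξ (φ a) = ξ a := by
  have hA : ∀ q : ℚ, ∃ V : Set γ, MeasurableSet V ∧
      φ ⁻¹' V = ξ ⁻¹' Set.Ioi (ENNReal.ofReal q) := by
    intro q
    have h := hξ (measurableSet_Ioi (a := ENNReal.ofReal q))
    rwa [MeasurableSpace.measurableSet_comap] at h
  choose V hVmeas hVeq using hA
  refine ⟨fun y => ⨆ q : ℚ, (V q).indicator (fun _ => ENNReal.ofReal q) y,
    Measurable.iSup fun q => measurable_const.indicator (hVmeas q), fun a => ?_⟩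
  have hmem : ∀ q : ℚ, φ a ∈ V q ↔ ENNReal.ofReal q < ξ a := by
    intro q
    constructor
    · intro h
      have h2 : a ∈ φ ⁻¹' V q := h
      rw [hVeq q] at h2; exact h2
    · intro h
      have h2 : a ∈ φ ⁻¹' V q := by rw [hVeq q]; exact h
      exact h2
  apply le_antisymm
  · refine iSup_le fun q => ?_
    by_cases h : φ a ∈ V q
    · rw [Set.indicator_of_mem h]; exact le_of_lt ((hmem q).1 h)
    · rw [Set.indicator_of_notMem h]; exact zero_le
  · by_contra hlt
    push_neg at hlt
    obtain ⟨q, _, h1, h2⟩ := ENNReal.lt_iff_exists_rat_btwn.mp hlt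
    have hVq : φ a ∈ V q := (hmem q).2 h2
    have hle : ENNReal.ofReal q ≤ ⨆ q : ℚ, (V q).indicator (fun _ => ENNReal.ofReal q) (φ a) := by
      refine le_trans ?_ (le_iSup _ q)
      rw [Set.indicator_of_mem hVq]
    exact absurd (lt_of_le_of_lt hle h1) (lt_irrefl _)

end DD

section FullFactor

/-- Factor a strongly measurable `f : Measure E → E → H` through countably many
evaluation coordinates. -/
theorem exists_factorization {E H : Type*} [MeasurableSpace E] [NormedAddCommGroup H]
    [CompleteSpace H] [TopologicalSpace.SeparableSpace H]
    (f : Measure E → E → H) (hf : StronglyMeasurable (uncurry f)) :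
    ∃ (t : ℕ → Set E) (F' : (ℕ → ℝ≥0∞) × E → H), (∀ i, MeasurableSet (t i)) ∧
      StronglyMeasurable F' ∧ ∀ η x, f η x = F' (fun i => η (t i), x) := by
  classical
  borelize H
  haveI : SecondCountableTopology H := UniformSpace.secondCountable_of_separable H
  obtain ⟨b, hbc, -, hbasis⟩ := TopologicalSpace.exists_countable_basis H
  have hmeasf : Measurable (uncurry f) := hf.measurable
  have hTu : ∀ u : Set H, u ∈ b → ∃ T : Set (Set E), T.Countable ∧
      (∀ t ∈ T, MeasurableSet t) ∧
      MeasurableSet[(⨆ t ∈ T, MeasurableSpace.comap (fun p : Measure E × E => p.1 t)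
          (borel ℝ≥0∞)) ⊔ MeasurableSpace.comap Prod.snd inferInstance]
        (uncurry f ⁻¹' u) := fun u hu =>
    exists_countable_coords (hmeasf (hbasis.isOpen hu).measurableSet)
  choose T hTc hTmeas hTset using hTu
  set Ttot : Set (Set E) := insert Set.univ (⋃ (u : Set H) (hu : u ∈ b), T u hu) with hTtot
  have hTtot_c : Ttot.Countable :=
    (Set.Countable.biUnion hbc hTc).insert _
  obtain ⟨t, ht_range⟩ := hTtot_c.exists_eq_range ⟨Set.univ, Set.mem_insert _ _⟩
  have ht_meas : ∀ i, MeasurableSet (t i) := by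
    intro i
    have : t i ∈ Ttot := by rw [ht_range]; exact Set.mem_range_self i
    rcases this with h | h
    · rw [h]; exact MeasurableSet.univ
    · obtain ⟨u, hu⟩ := Set.mem_iUnion.1 h
      obtain ⟨hub, hmem⟩ := Set.mem_iUnion.1 hu
      exact hTmeas u hub _ hmem
  set φ : Measure E × E → (ℕ → ℝ≥0∞) × E := fun p => (fun i => p.1 (t i), p.2) with hφ
  -- the coarse σ-algebras are all below `comap φ`
  have hsnd : MeasurableSpace.comap (Prod.snd : Measure E × E → E) inferInstance ≤
      MeasurableSpace.comap φ inferInstance := by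
    have h1 : (MeasurableSpace.comap (Prod.snd : (ℕ → ℝ≥0∞) × E → E) inferInstance).comap φ ≤
        MeasurableSpace.comap φ inferInstance :=
      MeasurableSpace.comap_mono (measurable_iff_comap_le.1 measurable_snd)
    rwa [MeasurableSpace.comap_comp] at h1
  have hcoord : ∀ i, MeasurableSpace.comap (fun p : Measure E × E => p.1 (t i))
      (borel ℝ≥0∞) ≤ MeasurableSpace.comap φ inferInstance := by
    intro i
    have h1 : ((borel ℝ≥0∞).comap (fun c : (ℕ → ℝ≥0∞) × E => c.1 i)).comap φ ≤
        MeasurableSpace.comap φ inferInstance := by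
      refine MeasurableSpace.comap_mono (measurable_iff_comap_le.1 ?_)
      have : Measurable fun c : (ℕ → ℝ≥0∞) × E => c.1 i :=
        (measurable_pi_apply i).comp measurable_fst
      exact this
    rwa [MeasurableSpace.comap_comp] at h1
  have hfm : Measurable[MeasurableSpace.comap φ inferInstance] (uncurry f) := by
    rw [measurable_iff_comap_le]
    show MeasurableSpace.comap (uncurry f) (borel H) ≤ MeasurableSpace.comap φ inferInstance
    rw [hbasis.borel_eq_generateFrom, MeasurableSpace.comap_generateFrom]
    refine MeasurableSpace.generateFrom_le ?_
    rintro v ⟨u, hu, rfl⟩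
    have hle : (⨆ t' ∈ T u hu, MeasurableSpace.comap (fun p : Measure E × E => p.1 t')
        (borel ℝ≥0∞)) ⊔ MeasurableSpace.comap Prod.snd inferInstance ≤
        MeasurableSpace.comap φ inferInstance := by
      refine sup_le (iSup₂_le fun t' ht' => ?_) hsnd
      have : t' ∈ Ttot := Set.mem_insert_of_mem _ (Set.mem_iUnion.2 ⟨u, Set.mem_iUnion.2 ⟨hu, ht'⟩⟩)
      rw [ht_range] at this
      obtain ⟨i, rfl⟩ := this
      exact hcoord i
    exact hle _ (hTset u hu)
  -- Doob–Dynkin through `φ`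
  obtain ⟨e, he⟩ := exists_measurableEmbedding_real H
  obtain ⟨r, hr, hre⟩ := he.exists_measurable_extend measurable_id fun _ => ⟨(0 : H)⟩
  have hθ : Measurable[MeasurableSpace.comap φ inferInstance] fun p => e (uncurry f p) :=
    he.measurable.comp hfm
  have hξp : Measurable[MeasurableSpace.comap φ inferInstance]
      fun p => ENNReal.ofReal (e (uncurry f p)) := ENNReal.measurable_ofReal.comp hθ
  have hξm : Measurable[MeasurableSpace.comap φ inferInstance]
      fun p => ENNReal.ofReal (-e (uncurry f p)) :=
    ENNReal.measurable_ofReal.comp hθ.neg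
  obtain ⟨Ξp, hΞp, hΞpeq⟩ := exists_factor_ennreal (φ := φ) hξp
  obtain ⟨Ξm, hΞm, hΞmeq⟩ := exists_factor_ennreal (φ := φ) hξm
  refine ⟨t, fun y => r ((Ξp y).toReal - (Ξm y).toReal),
    ht_meas, (hr.comp ((hΞp.ennreal_toReal).sub (hΞm.ennreal_toReal))).stronglyMeasurable,
    fun η x => ?_⟩
  show f η x = r ((Ξp (fun i => η (t i), x)).toReal - (Ξm (fun i => η (t i), x)).toReal)
  have h1' : Ξp (fun i => η (t i), x) = ENNReal.ofReal (e (f η x)) := hΞpeq (η, x)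
  have h2' : Ξm (fun i => η (t i), x) = ENNReal.ofReal (-e (f η x)) := hΞmeq (η, x)
  rw [h1', h2', ENNReal.toReal_ofReal', ENNReal.toReal_ofReal']
  have hmax : max (e (f η x)) 0 - max (-e (f η x)) 0 = e (f η x) := by
    rcases le_total 0 (e (f η x)) with h | h
    · rw [max_eq_left h, max_eq_right (neg_nonpos.2 h), sub_zero]
    · rw [max_eq_right h, max_eq_left (neg_nonneg.2 h), zero_sub, neg_neg]
  rw [hmax]
  exact (congrFun hre (f η x)).symm

end FullFactor

section RmPtLemmas

variable {E : Type*} [MeasurableSpace E]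

theorem rmPt_of_le {η : Measure E} {x : E} (h : Measure.dirac x ≤ η) :
    rmPt η x = η - Measure.dirac x := by
  rw [rmPt, if_pos h]

theorem rmPt_of_not_le {η : Measure E} {x : E} (h : ¬ Measure.dirac x ≤ η) :
    rmPt η x = η := by
  rw [rmPt, if_neg h]

end RmPtLemmas

section Step0

variable {Ω E : Type*} [MeasurableSpace Ω] [MeasurableSpace E]
  (P : Measure Ω) [IsProbabilityMeasure P] (μ : Measure E) [SigmaFinite μ]
  (N : Ω → Measure E)

theorem lintegral_eval (hMA : MeckeAdd P μ N) {s : Set E} (hs : MeasurableSet s) :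
    ∫⁻ ω, N ω s ∂P = μ s := by
  have h := hMA (fun _ x => s.indicator 1 x)
    ((measurable_one.indicator hs).comp measurable_snd)
  simp only [lintegral_indicator_one hs] at h
  rw [h, lintegral_const, measure_univ, mul_one]

theorem ae_dirac_le (hMA : MeckeAdd P μ N) (hMS : MeckeSub P μ N) (hN : Measurable N) :
    ∀ᵐ ω ∂P, (N ω) {x | ¬ Measure.dirac x ≤ N ω} = 0 := by
  have key : ∀ n : ℕ, ∀ᵐ ω ∂P,
      (N ω) ({x | ¬ Measure.dirac x ≤ N ω} ∩ spanningSets μ n) = 0 := by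
    intro n
    set s := spanningSets μ n with hs_def
    have hs : MeasurableSet s := measurableSet_spanningSets μ n
    have hμs : μ s ≠ ∞ := (measure_spanningSets_lt_top μ n).ne
    have hNs_meas : Measurable fun ω => N ω s := (Measure.measurable_coe hs).comp hN
    have hNs_int : ∫⁻ ω, N ω s ∂P = μ s := lintegral_eval P μ N hMA hs
    have hfin : ∀ᵐ ω ∂P, N ω s < ∞ := ae_lt_top hNs_meas (by rw [hNs_int]; exact hμs)
    have hmeas1 : Measurable (uncurry fun η x =>
        s.indicator (1 : E → ℝ≥0∞) x * (1 + (η + Measure.dirac x) s)⁻¹) := by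
      refine Measurable.mul ((measurable_one.indicator hs).comp measurable_snd) ?_
      refine Measurable.inv (Measurable.const_add ?_ 1)
      have h1 : Measurable fun p : Measure E × E => p.1 s :=
        (Measure.measurable_coe hs).comp measurable_fst
      have h2 : Measurable fun p : Measure E × E => (Measure.dirac p.2) s := by
        simp_rw [Measure.dirac_apply' _ hs]
        exact (measurable_one.indicator hs).comp measurable_snd
      have h3 : Measurable fun p : Measure E × E => p.1 s + (Measure.dirac p.2) s := h1.add h2
      simpa [Measure.add_apply] using h3
    have hmeas2 : Measurable (uncurry fun (η : Measure E) (x : E) =>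
        s.indicator (1 : E → ℝ≥0∞) x * (1 + η s)⁻¹) := by
      refine Measurable.mul ((measurable_one.indicator hs).comp measurable_snd) ?_
      exact Measurable.inv (Measurable.add measurable_const
        ((Measure.measurable_coe hs).comp measurable_fst))
    have hUW0 := (hMS _ hmeas1).trans (hMA _ hmeas2).symm
    set W : Ω → ℝ≥0∞ := fun ω => (1 + N ω s)⁻¹ * N ω s with hW
    have hWmeas : Measurable W := ((measurable_const.add hNs_meas).inv).mul hNs_meas
    have hind : ∀ (c : ℝ≥0∞), (fun x => s.indicator (1 : E → ℝ≥0∞) x * c)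
        = fun x => s.indicator (fun _ => c) x := by
      intro c; funext x; by_cases hx : x ∈ s <;> simp [hx]
    set U : Ω → ℝ≥0∞ := fun ω => ∫⁻ x,
      s.indicator (1 : E → ℝ≥0∞) x * (1 + (rmPt (N ω) x + Measure.dirac x) s)⁻¹ ∂(N ω) with hU
    have hptle : ∀ ω x, s.indicator (1 : E → ℝ≥0∞) x *
        (1 + (rmPt (N ω) x + Measure.dirac x) s)⁻¹ ≤
        s.indicator (fun _ => (1 + N ω s)⁻¹) x := by
      intro ω x
      by_cases hx : x ∈ s
      · simp only [Set.indicator_of_mem hx, Pi.one_apply, one_mul]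
        refine ENNReal.inv_le_inv' (add_le_add_right ?_ 1)
        by_cases hd : Measure.dirac x ≤ N ω
        · rw [rmPt_of_le hd, Measure.sub_add_cancel_of_le hd]
        · rw [rmPt_of_not_le hd, Measure.add_apply]
          exact le_self_add
      · simp [Set.indicator_of_notMem hx]
    have hUW : ∫⁻ ω, U ω ∂P = ∫⁻ ω, W ω ∂P := by
      have h2 : ∫⁻ ω, U ω ∂P = ∫⁻ ω, ∫⁻ x,
          s.indicator (1 : E → ℝ≥0∞) x * (1 + N ω s)⁻¹ ∂(N ω) ∂P := hUW0
      rw [h2]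
      refine lintegral_congr fun ω => ?_
      rw [hind, lintegral_indicator_const hs]
    have hUleW : ∀ ω, U ω ≤ W ω := by
      intro ω
      calc U ω ≤ ∫⁻ x, s.indicator (fun _ => (1 + N ω s)⁻¹) x ∂(N ω) :=
            lintegral_mono (hptle ω)
        _ = W ω := lintegral_indicator_const hs _
    have hWint_fin : ∫⁻ ω, W ω ∂P ≠ ∞ := by
      refine ne_of_lt (lt_of_le_of_lt (lintegral_mono fun ω => ?_)
        (by rw [hNs_int]; exact hμs.lt_top))
      calc (1 + N ω s)⁻¹ * N ω s ≤ 1 * N ω s :=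
            mul_le_mul_left (ENNReal.inv_le_one.2 le_self_add) _
        _ = N ω s := one_mul _
    obtain ⟨U', hU'meas, hU'le, hU'int⟩ := exists_measurable_le_lintegral_eq P U
    have hU'W : ∫⁻ ω, U' ω ∂P = ∫⁻ ω, W ω ∂P := by rw [← hU'int, hUW]
    have hU'leW : ∀ ω, U' ω ≤ W ω := fun ω => (hU'le ω).trans (hUleW ω)
    have hU'ae : ∀ᵐ ω ∂P, U' ω = W ω := by
      have hsub : ∫⁻ ω, W ω - U' ω ∂P = 0 := by
        rw [lintegral_sub hU'meas (by rw [hU'W]; exact hWint_fin)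
          (Filter.Eventually.of_forall hU'leW), hU'W, tsub_self]
      have h0 := (lintegral_eq_zero_iff (hWmeas.sub hU'meas)).1 hsub
      filter_upwards [h0] with ω hω
      have : W ω ≤ U' ω := tsub_eq_zero_iff_le.1 hω
      exact le_antisymm (hU'leW ω) this
    filter_upwards [hU'ae, hfin] with ω hU'ω hNωs
    have hUωW : U ω = W ω := le_antisymm (hUleW ω) (hU'ω ▸ hU'le ω)
    obtain ⟨u', hu'meas, hu'le, hu'int⟩ := exists_measurable_le_lintegral_eq (N ω)
      (fun x => s.indicator (1 : E → ℝ≥0∞) x * (1 + (rmPt (N ω) x + Measure.dirac x) s)⁻¹)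
    set c := (1 + N ω s)⁻¹ with hc
    set m0 : E → ℝ≥0∞ := s.indicator fun _ => c with hm0
    have hm0meas : Measurable m0 := measurable_const.indicator hs
    have hm0int : ∫⁻ x, m0 x ∂(N ω) = W ω := lintegral_indicator_const hs c
    have hu'intW : ∫⁻ x, u' x ∂(N ω) = W ω := by rw [← hu'int]; exact hUωW
    have hWωfin : W ω ≠ ∞ := by
      refine (ENNReal.mul_lt_top ?_ hNωs).ne
      exact lt_of_le_of_lt (ENNReal.inv_le_one.2 le_self_add) ENNReal.one_lt_top
    have hu'lem0 : ∀ x, u' x ≤ m0 x := fun x => (hu'le x).trans (hptle ω x)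
    have hu'ae : ∀ᵐ x ∂(N ω), u' x = m0 x := by
      have hsub : ∫⁻ x, m0 x - u' x ∂(N ω) = 0 := by
        rw [lintegral_sub hu'meas (by rw [hu'intW]; exact hWωfin)
          (Filter.Eventually.of_forall hu'lem0), hu'intW, hm0int, tsub_self]
      have h0 := (lintegral_eq_zero_iff (hm0meas.sub hu'meas)).1 hsub
      filter_upwards [h0] with x hx
      exact le_antisymm (hu'lem0 x) (tsub_eq_zero_iff_le.1 hx)
    have hD : (N ω) {x | ¬ u' x = m0 x} = 0 := ae_iff.1 hu'ae
    refine measure_mono_null ?_ hD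
    rintro x ⟨hbad, hxs⟩
    simp only [Set.mem_setOf_eq] at hbad ⊢
    intro heq
    have hval : s.indicator (1 : E → ℝ≥0∞) x *
        (1 + (rmPt (N ω) x + Measure.dirac x) s)⁻¹ = (1 + (N ω s + 1))⁻¹ := by
      rw [Set.indicator_of_mem hxs, Pi.one_apply, one_mul, rmPt_of_not_le hbad,
        Measure.add_apply, Measure.dirac_apply' x hs, Set.indicator_of_mem hxs, Pi.one_apply]
    have hlt : (1 + (N ω s + 1))⁻¹ < c := by
      rw [hc]
      refine ENNReal.inv_lt_inv.2 ?_
      rw [← add_assoc]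
      exact ENNReal.lt_add_right (by
        exact (ENNReal.add_lt_top.2 ⟨ENNReal.one_lt_top, hNωs⟩).ne) one_ne_zero
    have hle1 : u' x ≤ (1 + (N ω s + 1))⁻¹ := hval ▸ hu'le x
    have hm0x : m0 x = c := by rw [hm0, Set.indicator_of_mem hxs]
    rw [heq, hm0x] at hle1
    exact absurd (lt_of_le_of_lt hle1 hlt) (lt_irrefl _)
  have hall := ae_all_iff.2 key
  filter_upwards [hall] with ω hω
  have hcup : {x | ¬ Measure.dirac x ≤ N ω}
      = ⋃ n, ({x | ¬ Measure.dirac x ≤ N ω} ∩ spanningSets μ n) := by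
    rw [← Set.inter_iUnion, iUnion_spanningSets, Set.inter_univ]
  rw [hcup]
  exact measure_iUnion_null hω

end Step0

section Kern
open ProbabilityTheory

variable {Ω E : Type*} [MeasurableSpace Ω] [MeasurableSpace E]

theorem exists_sfinite_kernel (μ : Measure E) [SigmaFinite μ] (N : Ω → Measure E)
    (hN : Measurable N) :
    ∃ κ : Kernel Ω E, IsSFiniteKernel κ ∧
      ∀ ω, (∀ n, N ω (spanningSets μ n) < ∞) → κ ω = N ω := by
  classical
  set C : Set Ω := {ω | ∀ n, N ω (spanningSets μ n) < ∞} with hC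
  have hCmeas : MeasurableSet C := by
    have hCrw : C = ⋂ n, (fun ω => N ω (spanningSets μ n)) ⁻¹' Set.Iio ∞ := by
      ext ω; simp [hC]
    rw [hCrw]
    exact MeasurableSet.iInter fun n =>
      ((Measure.measurable_coe (measurableSet_spanningSets μ n)).comp hN) measurableSet_Iio
  set N' : Ω → Measure E := fun ω => if ω ∈ C then N ω else 0 with hN'def
  have hN'meas : Measurable N' := Measurable.ite hCmeas hN measurable_const
  set d : ℕ → Set E := disjointed (spanningSets μ) with hd
  have hdmeas : ∀ n, MeasurableSet (d n) :=
    MeasurableSet.disjointed fun n => measurableSet_spanningSets μ n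
  have hddisj : Pairwise (Disjoint on d) := disjoint_disjointed _
  have hdsub : ∀ n, d n ⊆ spanningSets μ n := fun n => disjointed_subset _ n
  have hdU : (⋃ n, d n) = Set.univ := by rw [iUnion_disjointed, iUnion_spanningSets]
  have hfin : ∀ ω n, N' ω (d n) < ∞ := by
    intro ω n
    by_cases hω : ω ∈ C
    · simp only [hN'def, if_pos hω]
      exact lt_of_le_of_lt (measure_mono (hdsub n)) (hω n)
    · simp [hN'def, if_neg hω]
  set κf : ℕ × ℕ → Ω → Measure E := fun p ω =>
    if N' ω (d p.1) ∈ Set.Ico (p.2 : ℝ≥0∞) ((p.2 : ℝ≥0∞) + 1) then (N' ω).restrict (d p.1)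
    else 0 with hκf
  have hκfmeas : ∀ p, Measurable (κf p) := by
    intro p
    have hres : Measurable fun ω => (N' ω).restrict (d p.1) := by
      refine Measure.measurable_of_measurable_coe _ fun t ht => ?_
      simp_rw [Measure.restrict_apply ht]
      exact (Measure.measurable_coe (ht.inter (hdmeas p.1))).comp hN'meas
    refine Measurable.ite ?_ hres measurable_const
    exact ((Measure.measurable_coe (hdmeas p.1)).comp hN'meas) measurableSet_Ico
  set e : ℕ ≃ ℕ × ℕ := (Denumerable.eqv (ℕ × ℕ)).symm with he
  have hκle : ∀ p ω, κf p ω Set.univ ≤ (p.2 : ℝ≥0∞) + 1 := by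
    intro p ω
    simp only [hκf]
    split_ifs with h
    · rw [Measure.restrict_apply_univ]
      exact le_of_lt h.2
    · simp
  refine ⟨Kernel.sum fun k => ⟨κf (e k), hκfmeas (e k)⟩,
    ⟨fun k => ⟨κf (e k), hκfmeas (e k)⟩, fun k => ⟨⟨((e k).2 : ℝ≥0∞) + 1,
      by
        exact ENNReal.add_lt_top.2 ⟨ENNReal.natCast_lt_top _, ENNReal.one_lt_top⟩,
      fun ω => hκle (e k) ω⟩⟩, rfl⟩, ?_⟩
  intro ω hω
  have hωC : ω ∈ C := hω
  have hNω : N' ω = N ω := by simp only [hN'def, if_pos hωC]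
  ext t ht
  rw [Kernel.sum_apply' _ _ ht]
  have hre : (∑' k : ℕ, κf (e k) ω t) = ∑' p : ℕ × ℕ, κf p ω t :=
    e.tsum_eq fun p => κf p ω t
  have hsingle : ∀ n : ℕ, (∑' m : ℕ, κf (n, m) ω t) = (N' ω).restrict (d n) t := by
    intro n
    set a := N' ω (d n) with ha_def
    have ha : a ≠ ∞ := (hfin ω n).ne
    set m0 : ℕ := ⌊a.toReal⌋₊ with hm0
    have hmem : a ∈ Set.Ico (m0 : ℝ≥0∞) ((m0 : ℝ≥0∞) + 1) := by
      constructor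
      · rw [← ENNReal.ofReal_toReal ha, ← ENNReal.ofReal_natCast m0]
        exact ENNReal.ofReal_le_ofReal (Nat.floor_le ENNReal.toReal_nonneg)
      · rw [← ENNReal.ofReal_toReal ha]
        have h1 : ((m0 : ℝ≥0∞) + 1) = ENNReal.ofReal ((m0 : ℝ) + 1) := by
          rw [ENNReal.ofReal_add (by positivity) zero_le_one, ENNReal.ofReal_natCast,
            ENNReal.ofReal_one]
        rw [h1]
        exact (ENNReal.ofReal_lt_ofReal_iff (by positivity)).2 (Nat.lt_floor_add_one _)
    have hcond : ∀ m : ℕ, a ∈ Set.Ico (m : ℝ≥0∞) ((m : ℝ≥0∞) + 1) ↔ m = m0 := by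
      intro m
      constructor
      · intro hm
        have h1 : (m : ℝ≥0∞) < (m0 : ℝ≥0∞) + 1 := lt_of_le_of_lt hm.1 hmem.2
        have h2 : (m0 : ℝ≥0∞) < (m : ℝ≥0∞) + 1 := lt_of_le_of_lt hmem.1 hm.2
        have h1' : m < m0 + 1 := by exact_mod_cast h1
        have h2' : m0 < m + 1 := by exact_mod_cast h2
        omega
      · rintro rfl; exact hmem
    calc (∑' m : ℕ, κf (n, m) ω t)
        = ∑' m : ℕ, if m = m0 then (N' ω).restrict (d n) t else 0 := by
          refine tsum_congr fun m => ?_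
          simp only [hκf, ← ha_def]
          by_cases h : m = m0
          · rw [if_pos ((hcond m).2 h), if_pos h]
          · rw [if_neg (fun hmem' => h ((hcond m).1 hmem')), if_neg h]
            simp
      _ = (N' ω).restrict (d n) t := tsum_ite_eq m0 _
  have hlast : (∑' n : ℕ, (N' ω).restrict (d n) t) = N' ω t := by
    simp_rw [Measure.restrict_apply ht]
    rw [← measure_iUnion (fun i j hij => ((hddisj hij).mono
      Set.inter_subset_right Set.inter_subset_right))
      fun n => ht.inter (hdmeas n)]
    rw [← Set.inter_iUnion, hdU, Set.inter_univ]
  calc (∑' k : ℕ, (⟨κf (e k), hκfmeas (e k)⟩ : Kernel Ω E) ω t)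
      = ∑' p : ℕ × ℕ, κf p ω t := hre
    _ = ∑' n : ℕ, ∑' m : ℕ, κf (n, m) ω t := ENNReal.tsum_prod (f := fun n m => κf (n, m) ω t)
    _ = ∑' n : ℕ, (N' ω).restrict (d n) t := tsum_congr hsingle
    _ = N' ω t := hlast
    _ = N ω t := by rw [hNω]

end Kern

section AeFst

theorem ae_fst_of_ae {Ω E : Type*} [MeasurableSpace Ω] [MeasurableSpace E] (P : Measure Ω)
    (μ : Measure E) [SFinite μ] {Q : Ω → Prop} (h : ∀ᵐ ω ∂P, Q ω) : ∀ᵐ pr ∂(P.prod μ), Q pr.1 := by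
  rw [ae_iff] at h ⊢
  have hsub : {pr : Ω × E | ¬ Q pr.1} ⊆ (toMeasurable P {ω | ¬ Q ω}) ×ˢ Set.univ := by
    intro pr hpr
    exact ⟨subset_toMeasurable _ _ hpr, trivial⟩
  refine measure_mono_null hsub ?_
  rw [Measure.prod_prod, measure_toMeasurable, h, zero_mul]

end AeFst

/-- Pathwise **Kabanov–Skorohod integral**
`δ(Φ) = ∫_E ε⁻_x Φ(x) N(dx) - ∫_E Φ(x) μ(dx)`, written in terms of a
representative `f` of `Φ`. -/
noncomputable def pathDelta {E H : Type*} [MeasurableSpace E]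
    [NormedAddCommGroup H] [NormedSpace ℝ H]
    (μ : Measure E) (f : Measure E → E → H) (η : Measure E) : H :=
  (∫ x, f (rmPt η x) x ∂η) - ∫ x, f η x ∂μ

/-- **`L¹`-`L^∞` duality**: for `F ∈ L^∞(Ω;H)` (representative `g`) and
`Φ ∈ L¹(Ω × E;H)` (representative `f`),
`𝔼⟪F, δ(Φ)⟫ = 𝔼 ∫_E ⟪D_x F, Φ(x)⟫ μ(dx)` with `D_x F = g (N + δ_x) - F`. -/
theorem L1_Linfty_duality
    {Ω E H : Type*} [MeasurableSpace Ω] [MeasurableSpace E]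
    [NormedAddCommGroup H] [InnerProductSpace ℝ H] [CompleteSpace H]
    [TopologicalSpace.SeparableSpace H]
    (P : Measure Ω) [IsProbabilityMeasure P] (μ : Measure E) [SigmaFinite μ]
    (N : Ω → Measure E) (hMA : MeckeAdd P μ N) (hMS : MeckeSub P μ N)
    (hN : Measurable N)
    (f : Measure E → E → H) (hf : StronglyMeasurable (Function.uncurry f))
    (hint : Integrable (fun pr : Ω × E => f (N pr.1) pr.2) (P.prod μ))
    (F : Ω → H) (g : Measure E → H) (hg : StronglyMeasurable g)
    (hF : ∀ᵐ ω ∂P, F ω = g (N ω)) (hFb : MemLp F ∞ P) :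
    ∫ ω, ⟪F ω, pathDelta μ f (N ω)⟫ ∂P
      = ∫ pr, ⟪g (N pr.1 + Measure.dirac pr.2) - F pr.1, f (N pr.1) pr.2⟫ ∂(P.prod μ) := by
  classical
  obtain ⟨t, F', ht_meas, hF'sm, hfact⟩ := exists_factorization f hf
  obtain ⟨κ, hκsf, hκeq⟩ := exists_sfinite_kernel μ N hN
  haveI : ProbabilityTheory.IsSFiniteKernel κ := hκsf
  have hmap : Measurable fun pr : Ω × E => (N pr.1, pr.2) :=
    (hN.comp measurable_fst).prodMk measurable_snd
  -- the jointly measurable coordinate version of `f (η - δ x) x`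
  set vΨ : Measure E × E → H :=
    fun p => F' (fun i => p.1 (t i) - (t i).indicator 1 p.2, p.2) with hvΨ
  have hvmap : Measurable fun p : Measure E × E =>
      ((fun i => p.1 (t i) - (t i).indicator 1 p.2 : ℕ → ℝ≥0∞), p.2) := by
    refine Measurable.prodMk (measurable_pi_lambda _ fun i => ?_) measurable_snd
    exact ((Measure.measurable_coe (ht_meas i)).comp measurable_fst).sub
      ((measurable_one.indicator (ht_meas i)).comp measurable_snd)
  have hvΨ_sm : StronglyMeasurable vΨ := hF'sm.comp_measurable hvmap
  have hshift : ∀ (η : Measure E) (x : E), vΨ (η + Measure.dirac x, x) = f η x := by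
    intro η x
    have hco : (fun i => (η + Measure.dirac x) (t i) - (t i).indicator 1 x)
        = fun i => η (t i) := by
      funext i
      rw [Measure.add_apply, Measure.dirac_apply' x (ht_meas i)]
      by_cases hx : x ∈ t i
      · rw [Set.indicator_of_mem hx, Pi.one_apply,
          ENNReal.add_sub_cancel_right ENNReal.one_ne_top]
      · rw [Set.indicator_of_notMem hx, add_zero, tsub_zero]
    show F' (fun i => (η + Measure.dirac x) (t i) - (t i).indicator 1 x, x) = f η x
    rw [hco, ← hfact]
  -- goodness of `rmPt`
  have hgood := ae_dirac_le P μ N hMA hMS hN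
  have hgood_v : ∀ᵐ ω ∂P, ∀ᵐ x ∂(N ω), f (rmPt (N ω) x) x = vΨ (N ω, x) := by
    filter_upwards [hgood] with ω hω
    rw [Filter.eventually_iff, mem_ae_iff]
    refine measure_mono_null ?_ hω
    intro x hx
    simp only [Set.mem_compl_iff, Set.mem_setOf_eq] at hx ⊢
    intro hd
    apply hx
    rw [rmPt_of_le hd, hfact (N ω - Measure.dirac x) x]
    show F' (fun i => (N ω - Measure.dirac x) (t i), x)
        = F' (fun i => N ω (t i) - (t i).indicator 1 x, x)
    have hco2 : (fun i => (N ω - Measure.dirac x) (t i))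
        = fun i => N ω (t i) - (t i).indicator 1 x := by
      funext i
      rw [Measure.sub_apply (ht_meas i) hd, Measure.dirac_apply' x (ht_meas i)]
    rw [hco2]
  -- a.e. identification of the kernel
  have hNsfin : ∀ᵐ ω ∂P, ∀ n, N ω (spanningSets μ n) < ∞ :=
    ae_all_iff.2 fun n => ae_lt_top
      ((Measure.measurable_coe (measurableSet_spanningSets μ n)).comp hN)
      (by rw [lintegral_eval P μ N hMA (measurableSet_spanningSets μ n)]
          exact (measure_spanningSets_lt_top μ n).ne)
  have hκae : ∀ᵐ ω ∂P, κ ω = N ω := hNsfin.mono fun ω h => hκeq ω h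
  -- bounds for `F` and `g`
  set G : Ω → H := fun ω => g (N ω) with hG
  have hGsm : StronglyMeasurable G := hg.comp_measurable hN
  set K : ℝ≥0∞ := eLpNormEssSup F P with hKdef
  have hKfin : K < ∞ := by have h := hFb.2; rwa [eLpNorm_exponent_top] at h
  have hGK : ∀ᵐ ω ∂P, (‖G ω‖₊ : ℝ≥0∞) ≤ K := by
    filter_upwards [ae_le_eLpNormEssSup (f := F) (μ := P), hF] with ω h1 h2
    rw [hG]
    simp only
    rw [← h2]
    exact_mod_cast h1
  -- the three basic integrands
  set Jp : Measure E × E → ℝ≥0∞ := fun p => ENNReal.ofReal ⟪g p.1, vΨ p⟫ with hJpdef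
  set Jm : Measure E × E → ℝ≥0∞ := fun p => ENNReal.ofReal (-⟪g p.1, vΨ p⟫) with hJmdef
  set Jn : Measure E × E → ℝ≥0∞ := fun p => (‖vΨ p‖₊ : ℝ≥0∞) with hJndef
  have hinner_sm : StronglyMeasurable fun p : Measure E × E => ⟪g p.1, vΨ p⟫ :=
    (hg.comp_measurable measurable_fst).inner hvΨ_sm
  have hJp_meas : Measurable Jp := ENNReal.measurable_ofReal.comp hinner_sm.measurable
  have hJm_meas : Measurable Jm := ENNReal.measurable_ofReal.comp hinner_sm.measurable.neg
  have hJn_meas : Measurable Jn := hvΨ_sm.enorm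
  -- Mecke (add) for the three integrands
  have hMAJp := hMA (fun η x => Jp (η, x)) hJp_meas
  have hMAJm := hMA (fun η x => Jm (η, x)) hJm_meas
  have hMAJn := hMA (fun η x => Jn (η, x)) hJn_meas
  -- rewrite the right hand sides using `hshift`
  have hprod_meas : Measurable fun pr : Ω × E => (N pr.1 + Measure.dirac pr.2, pr.2) := by
    refine Measurable.prodMk ?_ measurable_snd
    exact (hN.comp measurable_fst).add (Measure.measurable_dirac.comp measurable_snd)
  have hNshift : Measurable fun pr : Ω × E => N pr.1 + Measure.dirac pr.2 :=
    (hN.comp measurable_fst).add (Measure.measurable_dirac.comp measurable_snd)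
  have hsm_shift_inner : StronglyMeasurable fun pr : Ω × E =>
      ⟪g (N pr.1 + Measure.dirac pr.2), f (N pr.1) pr.2⟫ :=
    (hg.comp_measurable hNshift).inner (hf.comp_measurable hmap)
  have hRp : ∫⁻ ω, ∫⁻ x, Jp (N ω + Measure.dirac x, x) ∂μ ∂P
      = ∫⁻ pr, ENNReal.ofReal ⟪g (N pr.1 + Measure.dirac pr.2), f (N pr.1) pr.2⟫ ∂(P.prod μ) := by
    have hX : AEMeasurable (fun pr : Ω × E =>
        ENNReal.ofReal ⟪g (N pr.1 + Measure.dirac pr.2), f (N pr.1) pr.2⟫) (P.prod μ) :=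
      (ENNReal.measurable_ofReal.comp hsm_shift_inner.measurable).aemeasurable
    rw [lintegral_prod _ hX]
    refine lintegral_congr fun ω => lintegral_congr fun x => ?_
    simp only [hJpdef, hshift (N ω) x]
  have hRm : ∫⁻ ω, ∫⁻ x, Jm (N ω + Measure.dirac x, x) ∂μ ∂P
      = ∫⁻ pr, ENNReal.ofReal (-⟪g (N pr.1 + Measure.dirac pr.2), f (N pr.1) pr.2⟫)
        ∂(P.prod μ) := by
    have hX : AEMeasurable (fun pr : Ω × E =>
        ENNReal.ofReal (-⟪g (N pr.1 + Measure.dirac pr.2), f (N pr.1) pr.2⟫)) (P.prod μ) :=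
      (ENNReal.measurable_ofReal.comp hsm_shift_inner.measurable.neg).aemeasurable
    rw [lintegral_prod _ hX]
    refine lintegral_congr fun ω => lintegral_congr fun x => ?_
    simp only [hJmdef, hshift (N ω) x]
  have hRn : ∫⁻ ω, ∫⁻ x, Jn (N ω + Measure.dirac x, x) ∂μ ∂P
      = ∫⁻ pr, (‖f (N pr.1) pr.2‖₊ : ℝ≥0∞) ∂(P.prod μ) := by
    have hX : AEMeasurable (fun pr : Ω × E => (‖f (N pr.1) pr.2‖₊ : ℝ≥0∞)) (P.prod μ) :=
      ((hf.comp_measurable hmap).enorm).aemeasurable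
    rw [lintegral_prod _ hX]
    refine lintegral_congr fun ω => lintegral_congr fun x => ?_
    simp only [hJndef, hshift (N ω) x]
  have hfint : (∫⁻ pr, (‖f (N pr.1) pr.2‖₊ : ℝ≥0∞) ∂(P.prod μ)) < ∞ := hint.2
  -- kernel versions
  set Tp : Ω → ℝ≥0∞ := fun ω => ∫⁻ x, Jp (N ω, x) ∂(κ ω) with hTpdef
  set Tm : Ω → ℝ≥0∞ := fun ω => ∫⁻ x, Jm (N ω, x) ∂(κ ω) with hTmdef
  set Tn : Ω → ℝ≥0∞ := fun ω => ∫⁻ x, Jn (N ω, x) ∂(κ ω) with hTndef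
  have hTp_meas : Measurable Tp :=
    Measurable.lintegral_kernel_prod_right' (κ := κ) (hJp_meas.comp hmap)
  have hTm_meas : Measurable Tm :=
    Measurable.lintegral_kernel_prod_right' (κ := κ) (hJm_meas.comp hmap)
  have hTn_meas : Measurable Tn :=
    Measurable.lintegral_kernel_prod_right' (κ := κ) (hJn_meas.comp hmap)
  have hTp_int : ∫⁻ ω, Tp ω ∂P = ∫⁻ ω, ∫⁻ x, Jp (N ω, x) ∂(N ω) ∂P :=
    lintegral_congr_ae (hκae.mono fun ω h => by rw [hTpdef]; simp only; rw [h])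
  have hTm_int : ∫⁻ ω, Tm ω ∂P = ∫⁻ ω, ∫⁻ x, Jm (N ω, x) ∂(N ω) ∂P :=
    lintegral_congr_ae (hκae.mono fun ω h => by rw [hTmdef]; simp only; rw [h])
  have hTn_int : ∫⁻ ω, Tn ω ∂P = ∫⁻ ω, ∫⁻ x, Jn (N ω, x) ∂(N ω) ∂P :=
    lintegral_congr_ae (hκae.mono fun ω h => by rw [hTndef]; simp only; rw [h])
  have hTn_fin : ∫⁻ ω, Tn ω ∂P < ∞ := by
    rw [hTn_int, hMAJn, hRn]; exact hfint
  have hbound_p : ∀ᵐ ω ∂P, Tp ω ≤ K * Tn ω := by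
    filter_upwards [hGK] with ω hωK
    rw [hTpdef, hTndef]
    simp only
    have hJnω : Measurable fun x : E => Jn (N ω, x) :=
      hJn_meas.comp (measurable_const.prodMk measurable_id)
    rw [← lintegral_const_mul K hJnω]
    refine lintegral_mono fun x => ?_
    calc Jp (N ω, x) ≤ ENNReal.ofReal (‖g (N ω)‖ * ‖vΨ (N ω, x)‖) :=
          ENNReal.ofReal_le_ofReal (real_inner_le_norm _ _)
      _ = (‖g (N ω)‖₊ : ℝ≥0∞) * (‖vΨ (N ω, x)‖₊ : ℝ≥0∞) := by
          rw [ENNReal.ofReal_mul (norm_nonneg _), ofReal_norm,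
            ofReal_norm, enorm_eq_nnnorm, enorm_eq_nnnorm]
      _ ≤ K * Jn (N ω, x) := mul_le_mul_left hωK _
  have hbound_m : ∀ᵐ ω ∂P, Tm ω ≤ K * Tn ω := by
    filter_upwards [hGK] with ω hωK
    rw [hTmdef, hTndef]
    simp only
    have hJnω : Measurable fun x : E => Jn (N ω, x) :=
      hJn_meas.comp (measurable_const.prodMk measurable_id)
    rw [← lintegral_const_mul K hJnω]
    refine lintegral_mono fun x => ?_
    calc Jm (N ω, x) ≤ ENNReal.ofReal (‖g (N ω)‖ * ‖vΨ (N ω, x)‖) := by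
          refine ENNReal.ofReal_le_ofReal ?_
          refine le_trans (neg_le_abs _) ?_
          exact abs_real_inner_le_norm _ _
      _ = (‖g (N ω)‖₊ : ℝ≥0∞) * (‖vΨ (N ω, x)‖₊ : ℝ≥0∞) := by
          rw [ENNReal.ofReal_mul (norm_nonneg _), ofReal_norm,
            ofReal_norm, enorm_eq_nnnorm, enorm_eq_nnnorm]
      _ ≤ K * Jn (N ω, x) := mul_le_mul_left hωK _
  have hTp_fin : ∫⁻ ω, Tp ω ∂P < ∞ := by
    refine lt_of_le_of_lt (lintegral_mono_ae hbound_p) ?_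
    rw [lintegral_const_mul K hTn_meas]
    exact ENNReal.mul_lt_top hKfin hTn_fin
  have hTm_fin : ∫⁻ ω, Tm ω ∂P < ∞ := by
    refine lt_of_le_of_lt (lintegral_mono_ae hbound_m) ?_
    rw [lintegral_const_mul K hTn_meas]
    exact ENNReal.mul_lt_top hKfin hTn_fin
  -- transfer of the essential bound to the shifted measures
  have hBT : ∀ᵐ pr ∂(P.prod μ), (‖g (N pr.1 + Measure.dirac pr.2)‖₊ : ℝ≥0∞) ≤ K := by
    have hsetn : ∀ n : ℕ, ∀ᵐ pr ∂(P.prod μ), pr.2 ∈ spanningSets μ n →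
        (‖g (N pr.1 + Measure.dirac pr.2)‖₊ : ℝ≥0∞) ≤ K := by
      intro n
      set s := spanningSets μ n with hsdef
      have hs : MeasurableSet s := measurableSet_spanningSets μ n
      set B : Measure E → E → ℝ≥0∞ := fun η x =>
        s.indicator 1 x * {η' : Measure E | K < (‖g η'‖₊ : ℝ≥0∞)}.indicator 1 η with hBdef
      have hKset : MeasurableSet {η' : Measure E | K < (‖g η'‖₊ : ℝ≥0∞)} :=
        hg.enorm measurableSet_Ioi
      have hBmeas : Measurable (uncurry B) := by
        refine Measurable.mul ((measurable_one.indicator hs).comp measurable_snd) ?_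
        exact (measurable_one.indicator hKset).comp measurable_fst
      have h := hMA B hBmeas
      have hLHS : ∫⁻ ω, ∫⁻ x, B (N ω) x ∂(N ω) ∂P = 0 := by
        have hz : ∀ᵐ ω ∂P, (∫⁻ x, B (N ω) x ∂(N ω)) = 0 := by
          filter_upwards [hGK] with ω hωK
          have hnot : N ω ∉ {η' : Measure E | K < (‖g η'‖₊ : ℝ≥0∞)} := by
            simp only [Set.mem_setOf_eq, not_lt]
            exact hωK
          have hzero : ∀ x, B (N ω) x = 0 := by
            intro x
            rw [hBdef]
            simp only
            rw [Set.indicator_of_notMem hnot, mul_zero]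
          simp only [hzero, lintegral_zero]
        calc ∫⁻ ω, ∫⁻ x, B (N ω) x ∂(N ω) ∂P = ∫⁻ ω, (0 : ℝ≥0∞) ∂P :=
              lintegral_congr_ae hz
          _ = 0 := lintegral_zero
      have hRHS : ∫⁻ ω, ∫⁻ x, B (N ω + Measure.dirac x) x ∂μ ∂P = 0 := by
        rw [← h]; exact hLHS
      have hX : AEMeasurable (fun pr : Ω × E => B (N pr.1 + Measure.dirac pr.2) pr.2)
          (P.prod μ) := (hBmeas.comp hprod_meas).aemeasurable
      have hprod0 : ∫⁻ pr, B (N pr.1 + Measure.dirac pr.2) pr.2 ∂(P.prod μ) = 0 := by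
        rw [lintegral_prod _ hX]; exact hRHS
      have h0 := (lintegral_eq_zero_iff' hX).1 hprod0
      filter_upwards [h0] with pr hpr hmem
      by_contra hlt
      apply absurd hpr
      have hone : B (N pr.1 + Measure.dirac pr.2) pr.2 = 1 := by
        rw [hBdef]
        simp only
        rw [Set.indicator_of_mem hmem,
          Set.indicator_of_mem (by simpa using not_le.1 hlt), Pi.one_apply, Pi.one_apply,
          one_mul]
      rw [hone]
      simp
    have hcover : ∀ᵐ pr ∂(P.prod μ), ∃ n, pr.2 ∈ spanningSets μ n := by
      refine Filter.Eventually.of_forall fun pr => ?_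
      have hU : pr.2 ∈ ⋃ n, spanningSets μ n := by
        rw [iUnion_spanningSets]; trivial
      exact Set.mem_iUnion.1 hU
    filter_upwards [ae_all_iff.2 hsetn, hcover] with pr h1 h2
    obtain ⟨n, hn⟩ := h2
    exact h1 n hn
  -- the compensator term
  set Bf : Ω → H := fun ω => ∫ x, f (N ω) x ∂μ with hBfdef
  have hfN_sm : StronglyMeasurable fun pr : Ω × E => f (N pr.1) pr.2 := hf.comp_measurable hmap
  have hBf_sm : StronglyMeasurable Bf := hfN_sm.integral_prod_right'
  set K' : ℝ := K.toReal with hK'def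
  have hK'nonneg : 0 ≤ K' := ENNReal.toReal_nonneg
  have hnorm_of_le : ∀ {y : H}, (‖y‖₊ : ℝ≥0∞) ≤ K → ‖y‖ ≤ K' := by
    intro y hy
    have h1 := ENNReal.toReal_mono hKfin.ne hy
    simpa using h1
  have hGK' : ∀ᵐ ω ∂P, ‖G ω‖ ≤ K' := hGK.mono fun ω h => hnorm_of_le h
  have hFK' : ∀ᵐ ω ∂P, ‖F ω‖ ≤ K' := by
    filter_upwards [hGK', hF] with ω h1 h2
    rw [h2]; exact h1
  have hBT' : ∀ᵐ pr ∂(P.prod μ), ‖g (N pr.1 + Measure.dirac pr.2)‖ ≤ K' :=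
    hBT.mono fun pr h => hnorm_of_le h
  have hBint : Integrable (fun ω => ⟪G ω, Bf ω⟫) P := by
    refine Integrable.mono' ((hint.integral_norm_prod_left).const_mul K')
      (hGsm.inner hBf_sm).aestronglyMeasurable ?_
    filter_upwards [hGK'] with ω hω
    calc ‖⟪G ω, Bf ω⟫‖ = |⟪G ω, Bf ω⟫| := Real.norm_eq_abs _
      _ ≤ ‖G ω‖ * ‖Bf ω‖ := abs_real_inner_le_norm _ _
      _ ≤ K' * ‖Bf ω‖ := mul_le_mul_of_nonneg_right hω (norm_nonneg _)
      _ ≤ K' * ∫ x, ‖f (N ω) x‖ ∂μ := by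
          refine mul_le_mul_of_nonneg_left ?_ hK'nonneg
          exact norm_integral_le_integral_norm _
  -- the main pointwise identity
  have hmain : ∀ᵐ ω ∂P, ⟪F ω, pathDelta μ f (N ω)⟫
      = (((Tp ω).toReal - (Tm ω).toReal) - ⟪G ω, Bf ω⟫) := by
    filter_upwards [hκae, hgood_v, hF, ae_lt_top hTn_meas hTn_fin.ne] with ω hκω hgv hFω hTnω
    have hvω_sm : StronglyMeasurable fun x => vΨ (N ω, x) :=
      hvΨ_sm.comp_measurable (measurable_const.prodMk measurable_id)
    have hvint : Integrable (fun x => vΨ (N ω, x)) (N ω) := by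
      refine ⟨hvω_sm.aestronglyMeasurable, ?_⟩
      rw [hasFiniteIntegral_def]
      show (∫⁻ x, (‖vΨ (N ω, x)‖₊ : ℝ≥0∞) ∂(N ω)) < ∞
      have heq : (∫⁻ x, (‖vΨ (N ω, x)‖₊ : ℝ≥0∞) ∂(N ω)) = Tn ω := by
        rw [hTndef]; simp only; rw [hκω]
      rw [heq]; exact hTnω
    have hA : (∫ x, f (rmPt (N ω) x) x ∂(N ω)) = ∫ x, vΨ (N ω, x) ∂(N ω) :=
      integral_congr_ae hgv
    have hinner_int : Integrable (fun x => ⟪g (N ω), vΨ (N ω, x)⟫) (N ω) :=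
      hvint.const_inner _
    have hIP : ⟪g (N ω), ∫ x, vΨ (N ω, x) ∂(N ω)⟫
        = ∫ x, ⟪g (N ω), vΨ (N ω, x)⟫ ∂(N ω) := (integral_inner hvint _).symm
    have h1 : (∫⁻ x, ENNReal.ofReal ⟪g (N ω), vΨ (N ω, x)⟫ ∂(N ω)) = Tp ω := by
      rw [hTpdef]; simp only; rw [hκω]
    have h2 : (∫⁻ x, ENNReal.ofReal (-⟪g (N ω), vΨ (N ω, x)⟫) ∂(N ω)) = Tm ω := by
      rw [hTmdef]; simp only; rw [hκω]
    have hsplit : ∫ x, ⟪g (N ω), vΨ (N ω, x)⟫ ∂(N ω) = (Tp ω).toReal - (Tm ω).toReal := by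
      rw [integral_eq_lintegral_pos_part_sub_lintegral_neg_part hinner_int, h1, h2]
    rw [hFω]
    show ⟪g (N ω), (∫ x, f (rmPt (N ω) x) x ∂(N ω)) - ∫ x, f (N ω) x ∂μ⟫ = _
    rw [inner_sub_right, hA, hIP, hsplit]
  -- integrability of the positive/negative parts
  have hTpR_int : Integrable (fun ω => (Tp ω).toReal) P :=
    integrable_toReal_of_lintegral_ne_top hTp_meas.aemeasurable hTp_fin.ne
  have hTmR_int : Integrable (fun ω => (Tm ω).toReal) P :=
    integrable_toReal_of_lintegral_ne_top hTm_meas.aemeasurable hTm_fin.ne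
  -- integrability over the product
  have hI1int : Integrable
      (fun pr : Ω × E => ⟪g (N pr.1 + Measure.dirac pr.2), f (N pr.1) pr.2⟫) (P.prod μ) := by
    refine Integrable.mono' (hint.norm.const_mul K')
      hsm_shift_inner.aestronglyMeasurable ?_
    filter_upwards [hBT'] with pr h
    calc ‖⟪g (N pr.1 + Measure.dirac pr.2), f (N pr.1) pr.2⟫‖
        = |⟪g (N pr.1 + Measure.dirac pr.2), f (N pr.1) pr.2⟫| := Real.norm_eq_abs _
      _ ≤ ‖g (N pr.1 + Measure.dirac pr.2)‖ * ‖f (N pr.1) pr.2‖ := abs_real_inner_le_norm _ _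
      _ ≤ K' * ‖f (N pr.1) pr.2‖ := mul_le_mul_of_nonneg_right h (norm_nonneg _)
  have hsm_inner1 : StronglyMeasurable fun pr : Ω × E => ⟪g (N pr.1), f (N pr.1) pr.2⟫ :=
    (hg.comp_measurable (hN.comp measurable_fst)).inner hfN_sm
  have hFprod : ∀ᵐ pr ∂(P.prod μ), F pr.1 = g (N pr.1) := ae_fst_of_ae P μ hF
  have hI2int : Integrable (fun pr : Ω × E => ⟪F pr.1, f (N pr.1) pr.2⟫) (P.prod μ) := by
    refine Integrable.mono' (hint.norm.const_mul K')
      (hsm_inner1.aestronglyMeasurable.congr ?_) ?_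
    · filter_upwards [hFprod] with pr h
      rw [h]
    · filter_upwards [ae_fst_of_ae P μ hFK'] with pr h
      calc ‖⟪F pr.1, f (N pr.1) pr.2⟫‖ = |⟪F pr.1, f (N pr.1) pr.2⟫| := Real.norm_eq_abs _
        _ ≤ ‖F pr.1‖ * ‖f (N pr.1) pr.2‖ := abs_real_inner_le_norm _ _
        _ ≤ K' * ‖f (N pr.1) pr.2‖ := mul_le_mul_of_nonneg_right h (norm_nonneg _)
  have hGfprod_int : Integrable (fun pr : Ω × E => ⟪G pr.1, f (N pr.1) pr.2⟫) (P.prod μ) := by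
    refine Integrable.mono' (hint.norm.const_mul K')
      hsm_inner1.aestronglyMeasurable ?_
    filter_upwards [ae_fst_of_ae P μ hGK'] with pr h
    calc ‖⟪G pr.1, f (N pr.1) pr.2⟫‖ = |⟪G pr.1, f (N pr.1) pr.2⟫| := Real.norm_eq_abs _
      _ ≤ ‖G pr.1‖ * ‖f (N pr.1) pr.2‖ := abs_real_inner_le_norm _ _
      _ ≤ K' * ‖f (N pr.1) pr.2‖ := mul_le_mul_of_nonneg_right h (norm_nonneg _)
  -- the compensator term as a product integral
  have hGB_eq : ∀ᵐ ω ∂P, ⟪G ω, Bf ω⟫ = ∫ x, ⟪G ω, f (N ω) x⟫ ∂μ := by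
    filter_upwards [hint.prod_right_ae] with ω hω
    exact (integral_inner hω (G ω)).symm
  have hBfprod : ∫ ω, ⟪G ω, Bf ω⟫ ∂P = ∫ pr, ⟪F pr.1, f (N pr.1) pr.2⟫ ∂(P.prod μ) := by
    calc ∫ ω, ⟪G ω, Bf ω⟫ ∂P = ∫ ω, ∫ x, ⟪G ω, f (N ω) x⟫ ∂μ ∂P := integral_congr_ae hGB_eq
      _ = ∫ pr : Ω × E, ⟪G pr.1, f (N pr.1) pr.2⟫ ∂(P.prod μ) := integral_integral hGfprod_int
      _ = ∫ pr : Ω × E, ⟪F pr.1, f (N pr.1) pr.2⟫ ∂(P.prod μ) := by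
          refine integral_congr_ae (hFprod.mono fun pr h => ?_)
          show ⟪G pr.1, f (N pr.1) pr.2⟫ = ⟪F pr.1, f (N pr.1) pr.2⟫
          rw [h]
  -- final assembly
  calc ∫ ω, ⟪F ω, pathDelta μ f (N ω)⟫ ∂P
      = ∫ ω, (((Tp ω).toReal - (Tm ω).toReal) - ⟪G ω, Bf ω⟫) ∂P := integral_congr_ae hmain
    _ = (∫ ω, ((Tp ω).toReal - (Tm ω).toReal) ∂P) - ∫ ω, ⟪G ω, Bf ω⟫ ∂P :=
        integral_sub (hTpR_int.sub hTmR_int) hBint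
    _ = ((∫⁻ ω, Tp ω ∂P).toReal - (∫⁻ ω, Tm ω ∂P).toReal) - ∫ ω, ⟪G ω, Bf ω⟫ ∂P := by
        rw [integral_sub hTpR_int hTmR_int,
          integral_toReal hTp_meas.aemeasurable (ae_lt_top hTp_meas hTp_fin.ne),
          integral_toReal hTm_meas.aemeasurable (ae_lt_top hTm_meas hTm_fin.ne)]
    _ = (∫ pr, ⟪g (N pr.1 + Measure.dirac pr.2), f (N pr.1) pr.2⟫ ∂(P.prod μ))
        - ∫ ω, ⟪G ω, Bf ω⟫ ∂P := by
        rw [hTp_int, hTm_int, hMAJp, hMAJm, hRp, hRm,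
          ← integral_eq_lintegral_pos_part_sub_lintegral_neg_part hI1int]
    _ = (∫ pr, ⟪g (N pr.1 + Measure.dirac pr.2), f (N pr.1) pr.2⟫ ∂(P.prod μ))
        - ∫ pr, ⟪F pr.1, f (N pr.1) pr.2⟫ ∂(P.prod μ) := by rw [hBfprod]
    _ = ∫ pr, ⟪g (N pr.1 + Measure.dirac pr.2) - F pr.1, f (N pr.1) pr.2⟫ ∂(P.prod μ) := by
        rw [← integral_sub hI1int hI2int]
        refine integral_congr_ae (Filter.Eventually.of_forall fun pr => ?_)
        show ⟪g (N pr.1 + Measure.dirac pr.2), f (N pr.1) pr.2⟫ - ⟪F pr.1, f (N pr.1) pr.2⟫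
            = ⟪g (N pr.1 + Measure.dirac pr.2) - F pr.1, f (N pr.1) pr.2⟫
        rw [inner_sub_left]
end

section
/- (Commutation relation, $L^1$-version.) Assume additionally that $(E,\mathcal{E})$ is a Borel space. Let $\Phi \in L^1(\Omega\times E;H)$ be such that $D_x\Phi \in L^1(\Omega\times E;H)$ for $\mu$-almost all $x \in E$. Then $D_x\delta(\Phi) = \delta(D_x\Phi) + \Phi(x)$ holds $\mathbb{P}\otimes\mu$-almost everywhere. -/
open MeasureTheory Filter
open scoped ENNReal RealInnerProductSpace

open scoped NNReal
open ProbabilityTheory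

section Aux

open ProbabilityTheory

variable {α E : Type*} [MeasurableSpace α] [MeasurableSpace E]

theorem isSFiniteKernel_of_forall_finite (κ : Kernel α E) (hκ : ∀ a, κ a Set.univ < ∞) :
    IsSFiniteKernel κ := by
  classical
  set cond : ℕ → α → Prop := fun m a => κ a Set.univ ∈ Set.Ico (m : ℝ≥0∞) (m + 1) with hcond_def
  have hcond : ∀ m, MeasurableSet {a | cond m a} :=
    fun m => (κ.measurable_coe MeasurableSet.univ) measurableSet_Ico
  set κs : ℕ → Kernel α E := fun m =>
    ⟨fun a => if cond m a then κ a else 0,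
      Measurable.ite (hcond m) κ.measurable measurable_const⟩ with hκs_def
  have happ : ∀ m a (s : Set E), κs m a s = if cond m a then κ a s else 0 := by
    intro m a s
    show (if cond m a then κ a else 0) s = _
    exact apply_ite (fun ν : Measure E => ν s) _ _ _
  refine ⟨⟨κs, fun m => ⟨⟨(m : ℝ≥0∞) + 1, ?_, fun a => ?_⟩⟩, ?_⟩⟩
  · exact ENNReal.add_lt_top.mpr ⟨ENNReal.natCast_lt_top m, ENNReal.one_lt_top⟩
  · rw [happ]
    split_ifs with h
    · exact le_of_lt h.2
    · exact zero_le
  · ext a s hs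
    rw [Kernel.sum_apply' _ _ hs]
    simp_rw [happ]
    have hr : κ a Set.univ ≠ ∞ := (hκ a).ne
    set m0 : ℕ := Nat.floor (κ a Set.univ).toNNReal with hm0
    have hrt : (((κ a Set.univ).toNNReal : ℝ≥0) : ℝ≥0∞) = κ a Set.univ := ENNReal.coe_toNNReal hr
    have hc : cond m0 a := by
      constructor
      · rw [← hrt, ← ENNReal.coe_natCast, ENNReal.coe_le_coe]
        exact Nat.floor_le zero_le
      · rw [← hrt, ← ENNReal.coe_natCast, ← ENNReal.coe_one, ← ENNReal.coe_add,
          ENNReal.coe_lt_coe]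
        exact Nat.lt_floor_add_one _
    rw [tsum_eq_single m0, if_pos hc]
    intro m hm
    rw [if_neg]
    intro hcm
    apply hm
    have h3 : (m : ℝ≥0∞) < (m0 : ℝ≥0∞) + 1 := lt_of_le_of_lt hcm.1 hc.2
    have h4 : (m0 : ℝ≥0∞) < (m : ℝ≥0∞) + 1 := lt_of_le_of_lt hc.1 hcm.2
    have h3' : m < m0 + 1 := by exact_mod_cast h3
    have h4' : m0 < m + 1 := by exact_mod_cast h4
    omega

theorem isSFiniteKernel_of_spanning (κ : Kernel α E) (S : ℕ → Set E)
    (hS : ∀ n, MeasurableSet (S n)) (hU : ⋃ n, S n = Set.univ)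
    (hfin : ∀ a n, κ a (S n) < ∞) : IsSFiniteKernel κ := by
  have hT : ∀ n, MeasurableSet (disjointed S n) := MeasurableSet.disjointed hS
  have heq : κ = Kernel.sum fun n => κ.restrict (hT n) := by
    ext a s hs
    rw [Kernel.sum_apply' _ _ hs]
    simp_rw [Kernel.restrict_apply' _ _ _ hs]
    rw [← measure_iUnion ((disjoint_disjointed S).mono fun i j h =>
        h.mono Set.inter_subset_right Set.inter_subset_right)
        (fun n => hs.inter (hT n))]
    rw [← Set.inter_iUnion, iUnion_disjointed, hU, Set.inter_univ]
  rw [heq]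
  refine Kernel.isSFiniteKernel_sum (hκs := fun n => isSFiniteKernel_of_forall_finite _ fun a => ?_)
  rw [Kernel.restrict_apply' _ _ _ MeasurableSet.univ, Set.univ_inter]
  exact lt_of_le_of_lt (measure_mono (disjointed_subset S n)) (hfin a n)

open scoped Classical in
noncomputable def sfMod (S : ℕ → Set E) (η : Measure E) : Measure E :=
  if ∀ n, η (S n) < ∞ then η else 0

theorem sfMod_eq_self {S : ℕ → Set E} {η : Measure E} (h : ∀ n, η (S n) < ∞) :
    sfMod S η = η := if_pos h

theorem sfMod_fin (S : ℕ → Set E) (η : Measure E) (n : ℕ) : sfMod S η (S n) < ∞ := by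
  unfold sfMod
  split_ifs with h
  · exact h n
  · simp

theorem measurable_sfMod (S : ℕ → Set E) (hS : ∀ n, MeasurableSet (S n)) :
    Measurable (sfMod S) := by
  unfold sfMod
  have hset : MeasurableSet {η : Measure E | ∀ n, η (S n) < ∞} := by
    rw [Set.setOf_forall]
    exact MeasurableSet.iInter fun n => (Measure.measurable_coe (hS n)) measurableSet_Iio
  exact Measurable.ite hset measurable_id measurable_const

theorem sigmaFinite_sfMod (S : ℕ → Set E) (hU : ⋃ n, S n = Set.univ) (η : Measure E) :
    SigmaFinite (sfMod S η) :=
  ⟨⟨⟨S, fun _ => trivial, fun n => sfMod_fin S η n, hU⟩⟩⟩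

noncomputable def sfKer (S : ℕ → Set E) (hS : ∀ n, MeasurableSet (S n))
    (F : α → Measure E) (hF : Measurable F) : Kernel α E :=
  ⟨fun a => sfMod S (F a), (measurable_sfMod S hS).comp hF⟩

@[simp] theorem sfKer_apply (S : ℕ → Set E) (hS : ∀ n, MeasurableSet (S n))
    (F : α → Measure E) (hF : Measurable F) (a : α) : sfKer S hS F hF a = sfMod S (F a) := rfl

theorem sfKer_isSFinite (S : ℕ → Set E) (hS : ∀ n, MeasurableSet (S n))
    (hU : ⋃ n, S n = Set.univ) (F : α → Measure E) (hF : Measurable F) :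
    IsSFiniteKernel (sfKer S hS F hF) :=
  isSFiniteKernel_of_spanning _ S hS hU fun a n => sfMod_fin S (F a) n

theorem measurable_pointMass [StandardBorelSpace E] (κ : Kernel α E) [IsSFiniteKernel κ]
    {g : α → E} (hg : Measurable g) : Measurable fun a => κ a {g a} := by
  letI := upgradeStandardBorel E
  have hset : MeasurableSet {q : α × E | q.2 = g q.1} :=
    StronglyMeasurable.measurableSet_eq_fun measurable_snd.stronglyMeasurable
      (hg.comp measurable_fst).stronglyMeasurable
  have hmeas : Measurable (Function.uncurry fun a (y : E) =>
      ({g a} : Set E).indicator (1 : E → ℝ≥0∞) y) := by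
    have : (Function.uncurry fun a (y : E) => ({g a} : Set E).indicator (1 : E → ℝ≥0∞) y)
        = {q : α × E | q.2 = g q.1}.indicator (fun _ => 1) := by
      ext q
      by_cases h : q.2 = g q.1 <;>
        simp [Function.uncurry, Set.indicator, h]
    rw [this]
    exact measurable_const.indicator hset
  have key := Measurable.lintegral_kernel_prod_right (κ := κ) hmeas
  have : ∀ a, ∫⁻ y, ({g a} : Set E).indicator (1 : E → ℝ≥0∞) y ∂κ a = κ a {g a} :=
    fun a => lintegral_indicator_one (measurableSet_singleton _)
  simpa only [this] using key

theorem dirac_le_iff [MeasurableSingletonClass E] (η : Measure E) (x : E) :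
    Measure.dirac x ≤ η ↔ 1 ≤ η {x} := by
  constructor
  · intro h
    have := h {x}
    rwa [Measure.dirac_apply_of_mem (Set.mem_singleton x)] at this
  · intro h
    rw [Measure.le_iff]
    intro s hs
    rw [Measure.dirac_apply' _ hs]
    by_cases hx : x ∈ s
    · rw [Set.indicator_of_mem hx]
      exact le_trans h (measure_mono (Set.singleton_subset_iff.mpr hx))
    · rw [Set.indicator_of_notMem hx]
      exact zero_le

theorem rmPt_coe [MeasurableSingletonClass E] (η : Measure E) (x : E) {s : Set E}
    (hs : MeasurableSet s) :
    rmPt η x s = if 1 ≤ η {x} then η s - Measure.dirac x s else η s := by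
  unfold rmPt
  by_cases h : Measure.dirac x ≤ η
  · rw [if_pos h, if_pos ((dirac_le_iff η x).mp h), Measure.sub_apply hs h]
  · rw [if_neg h, if_neg fun hh => h ((dirac_le_iff η x).mpr hh)]

theorem measurable_rmPt [MeasurableSingletonClass E] {F : α → Measure E} {g : α → E}
    (hF : Measurable F) (hg : Measurable g) (hFg : Measurable fun a => F a {g a}) :
    Measurable fun a => rmPt (F a) (g a) := by
  apply Measure.measurable_of_measurable_coe
  intro s hs
  simp_rw [rmPt_coe _ _ hs, Measure.dirac_apply' _ hs]
  exact Measurable.ite (measurableSet_le measurable_const hFg)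
    (((Measure.measurable_coe hs).comp hF).sub ((measurable_const.indicator hs).comp hg))
    ((Measure.measurable_coe hs).comp hF)

theorem measurable_addMeas {F G : α → Measure E} (hF : Measurable F) (hG : Measurable G) :
    Measurable fun a => F a + G a := by
  apply Measure.measurable_of_measurable_coe
  intro s hs
  simp_rw [Measure.add_apply]
  exact ((Measure.measurable_coe hs).comp hF).add ((Measure.measurable_coe hs).comp hG)

theorem rmPt_add_dirac_self (η : Measure E) (x : E) : rmPt (η + Measure.dirac x) x = η := by
  unfold rmPt
  rw [if_pos (Measure.le_add_left le_rfl)]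
  exact Measure.add_sub_cancel

theorem rmPt_add_dirac (η : Measure E) (x y : E) (h : Measure.dirac y ≤ η) :
    rmPt (η + Measure.dirac x) y = rmPt η y + Measure.dirac x := by
  have h' : Measure.dirac y ≤ η + Measure.dirac x := Measure.le_add_right h
  unfold rmPt
  rw [if_pos h', if_pos h]
  ext s hs
  rw [Measure.sub_apply hs h', Measure.add_apply, Measure.add_apply, Measure.sub_apply hs h,
    ENNReal.sub_add_eq_add_sub (h s) (measure_ne_top _ _)]

theorem integrable_dirac_any {H : Type*} [NormedAddCommGroup H] [MeasurableSingletonClass E]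
    {g : E → H} (a : E) : Integrable g (Measure.dirac a) := by
  have h : g =ᵐ[Measure.dirac a] fun _ => g a := by
    rw [MeasureTheory.ae_dirac_eq]
    exact Filter.eventually_pure.mpr rfl
  exact (integrable_const (g a)).congr h.symm

end Aux

section Key

variable {E H : Type*} [MeasurableSpace E] [MeasurableSingletonClass E]
  [NormedAddCommGroup H] [NormedSpace ℝ H] [CompleteSpace H]

theorem key_pointwise (μ : Measure E) (f : Measure E → E → H) (η : Measure E) (x : E)
    (h1 : Integrable (fun y => f η y) μ)
    (h2 : Integrable (fun y => f (η + Measure.dirac x) y) μ)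
    (h3 : Integrable (fun y => f (rmPt η y) y) η)
    (h4 : Integrable (fun y => f (rmPt η y + Measure.dirac x) y) η)
    (h5 : ∀ᵐ y ∂η, Measure.dirac y ≤ η) :
    pathDelta μ f (η + Measure.dirac x) - pathDelta μ f η
      = pathDelta μ (fun ν y => f (ν + Measure.dirac x) y - f ν y) η + f η x := by
  have hE5 : (fun y => f (rmPt (η + Measure.dirac x) y) y)
      =ᵐ[η] fun y => f (rmPt η y + Measure.dirac x) y :=
    h5.mono fun y hy => by simp only [rmPt_add_dirac _ _ _ hy]
  have h4' : Integrable (fun y => f (rmPt (η + Measure.dirac x) y) y) η := h4.congr hE5.symm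
  have hδ : Integrable (fun y => f (rmPt (η + Measure.dirac x) y) y) (Measure.dirac x) :=
    integrable_dirac_any x
  simp only [pathDelta]
  rw [integral_add_measure h4' hδ, integral_dirac, rmPt_add_dirac_self,
    integral_congr_ae hE5, integral_sub h4 h3, integral_sub h2 h1]
  abel

end Key

/-- **Commutation relation (`L¹`-version).**  Assume `(E, ℰ)` is a Borel space.
Let `Φ ∈ L¹(Ω × E;H)` (representative `f`) be such that
`D_x Φ ∈ L¹(Ω × E;H)` for `μ`-a.e. `x`.  Then
`D_x δ(Φ) = δ(D_x Φ) + Φ(x)` holds `P ⊗ μ`-a.e. -/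
theorem commutation_L1
    {Ω E H : Type*} [MeasurableSpace Ω] [MeasurableSpace E] [StandardBorelSpace E]
    [NormedAddCommGroup H] [InnerProductSpace ℝ H] [CompleteSpace H]
    [TopologicalSpace.SeparableSpace H]
    (P : Measure Ω) [IsProbabilityMeasure P] (μ : Measure E) [SigmaFinite μ]
    (N : Ω → Measure E) (hMA : MeckeAdd P μ N) (hMS : MeckeSub P μ N)
    (hN : Measurable N)
    (f : Measure E → E → H) (hf : StronglyMeasurable (Function.uncurry f))
    (hΦ : Integrable (fun pr : Ω × E => f (N pr.1) pr.2) (P.prod μ))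
    (hDΦ : ∀ᵐ x ∂μ, Integrable (fun pr : Ω × E =>
        f (N pr.1 + Measure.dirac x) pr.2 - f (N pr.1) pr.2) (P.prod μ)) :
    ∀ᵐ pr ∂(P.prod μ),
      pathDelta μ f (N pr.1 + Measure.dirac pr.2) - pathDelta μ f (N pr.1)
        = pathDelta μ (fun η y => f (η + Measure.dirac pr.2) y - f η y) (N pr.1)
            + f (N pr.1) pr.2 := by
  classical
  set S : ℕ → Set E := spanningSets μ with hSdef
  have hS : ∀ n, MeasurableSet (S n) := measurableSet_spanningSets μ
  have hU : ⋃ n, S n = Set.univ := iUnion_spanningSets μ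
  set N' : Ω → Measure E := fun ω => sfMod S (N ω) with hN'def
  have hN' : Measurable N' := (measurable_sfMod S hS).comp hN
  have hN'fin : ∀ ω n, N' ω (S n) < ∞ := fun ω n => sfMod_fin S (N ω) n
  have hsf : ∀ ω, SigmaFinite (N' ω) := fun ω => sigmaFinite_sfMod S hU (N ω)
  -- kernels
  set κ1 : Kernel Ω E := sfKer S hS N hN with hκ1def
  haveI hκ1sf : IsSFiniteKernel κ1 := sfKer_isSFinite S hS hU N hN
  set κm : Kernel (Measure E) E := sfKer S hS id measurable_id with hκmdef
  haveI hκmsf : IsSFiniteKernel κm := sfKer_isSFinite S hS hU id measurable_id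
  -- Step 1 : a.e. ω, N ω = N' ω
  have hgoodn : ∀ n, ∀ᵐ ω ∂P, N ω (S n) < ∞ := by
    intro n
    have hg : Measurable (Function.uncurry fun (_ : Measure E) (y : E) =>
        (S n).indicator (1 : E → ℝ≥0∞) y) :=
      (measurable_const.indicator (hS n)).comp measurable_snd
    have heq := hMA _ hg
    simp_rw [lintegral_indicator_one (hS n)] at heq
    have hfin : ∫⁻ ω, N ω (S n) ∂P < ∞ := by
      rw [heq, lintegral_const, measure_univ, mul_one]
      exact measure_spanningSets_lt_top μ n
    exact ae_lt_top ((Measure.measurable_coe (hS n)).comp hN) hfin.ne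
  have hgood : ∀ᵐ ω ∂P, N ω = N' ω := by
    filter_upwards [ae_all_iff.mpr hgoodn] with ω hω
    exact (sfMod_eq_self hω).symm
  -- joint measurability helpers
  have hsing2 : Measurable fun p : Ω × E => N' p.1 {p.2} :=
    measurable_pointMass (κ1.comap Prod.fst measurable_fst) measurable_snd
  have hsing3 : Measurable fun q : (Ω × E) × E => N' q.1.1 {q.2} :=
    measurable_pointMass (κ1.comap (fun q : (Ω × E) × E => q.1.1)
      (measurable_fst.comp measurable_fst)) measurable_snd
  have hrm2 : Measurable fun p : Ω × E => rmPt (N' p.1) p.2 :=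
    measurable_rmPt (hN'.comp measurable_fst) measurable_snd hsing2
  have hrm3 : Measurable fun q : (Ω × E) × E => rmPt (N' q.1.1) q.2 :=
    measurable_rmPt (hN'.comp (measurable_fst.comp measurable_fst)) measurable_snd hsing3
  have Ma : Measurable fun p : Ω × E =>
      ∫⁻ y, (‖f (N' p.1 + Measure.dirac p.2) y‖₊ : ℝ≥0∞) ∂μ := by
    have h := (hf.comp_measurable ((measurable_addMeas
      (hN'.comp (measurable_fst.comp (measurable_fst : Measurable fun q : (Ω × E) × E => q.1)))
      (Measure.measurable_dirac.comp (measurable_snd.comp measurable_fst))).prodMk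
        measurable_snd)).enorm
    exact Measurable.lintegral_prod_right' (f := fun q : (Ω × E) × E =>
      (‖f (N' q.1.1 + Measure.dirac q.1.2) q.2‖₊ : ℝ≥0∞)) h
  have Mb : Measurable fun p : Ω × E =>
      ∫⁻ y, (‖f (rmPt (N' p.1) y + Measure.dirac p.2) y‖₊ : ℝ≥0∞) ∂(N' p.1) := by
    refine Measurable.lintegral_kernel_prod_right
      (κ := κ1.comap Prod.fst measurable_fst) ?_
    exact (hf.comp_measurable ((measurable_addMeas hrm3
      (Measure.measurable_dirac.comp (measurable_snd.comp measurable_fst))).prodMk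
        measurable_snd)).enorm
  have Mc : Measurable fun ω =>
      ∫⁻ y, (‖f (rmPt (N' ω) y) y‖₊ : ℝ≥0∞) ∂(N' ω) := by
    refine Measurable.lintegral_kernel_prod_right (κ := κ1) ?_
    exact (hf.comp_measurable (hrm2.prodMk measurable_snd)).enorm
  -- Step H5 : atoms
  have h5main : ∀ᵐ ω ∂P, ∀ᵐ y ∂(N' ω), Measure.dirac y ≤ N' ω := by
    set g5 : Measure E → E → ℝ≥0∞ := fun η y => if 1 ≤ sfMod S η {y} then 0 else 1 with hg5def
    have hsm : Measurable fun q : Measure E × E => sfMod S q.1 {q.2} :=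
      measurable_pointMass (κm.comap Prod.fst measurable_fst) measurable_snd
    have hg5 : Measurable (Function.uncurry g5) :=
      Measurable.ite (measurableSet_le measurable_const hsm) measurable_const measurable_const
    have heq := hMA g5 hg5
    have hR : ∫⁻ ω, ∫⁻ x, g5 (N ω + Measure.dirac x) x ∂μ ∂P = 0 := by
      have h0 : ∀ᵐ ω ∂P, ∫⁻ x, g5 (N ω + Measure.dirac x) x ∂μ = 0 := by
        filter_upwards [ae_all_iff.mpr hgoodn] with ω hω
        have hz : ∀ x, g5 (N ω + Measure.dirac x) x = 0 := by
          intro x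
          have hfin' : ∀ n, (N ω + Measure.dirac x) (S n) < ∞ := by
            intro n
            rw [Measure.add_apply]
            refine ENNReal.add_lt_top.mpr ⟨hω n, ?_⟩
            rw [Measure.dirac_apply' _ (hS n)]
            exact lt_of_le_of_lt (Set.indicator_apply_le fun _ => le_rfl) ENNReal.one_lt_top
          have h1x : (1 : ℝ≥0∞) ≤ (N ω + Measure.dirac x) {x} := by
            rw [Measure.add_apply, Measure.dirac_apply_of_mem (Set.mem_singleton x)]
            exact le_add_self
          simp only [hg5def, sfMod_eq_self hfin', if_pos h1x]
        simp [hz]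
      rw [lintegral_congr_ae h0, lintegral_zero]
    have hL : ∫⁻ ω, ∫⁻ y, g5 (N ω) y ∂(N ω) ∂P
        = ∫⁻ ω, ∫⁻ y, (if 1 ≤ N' ω {y} then (0 : ℝ≥0∞) else 1) ∂(N' ω) ∂P := by
      refine lintegral_congr_ae ?_
      filter_upwards [hgood] with ω hω
      rw [hω]
      simp only [hg5def]
      rw [sfMod_eq_self fun n => hN'fin ω n]
    have M5 : Measurable fun ω => ∫⁻ y, (if 1 ≤ N' ω {y} then (0 : ℝ≥0∞) else 1) ∂(N' ω) := by
      refine Measurable.lintegral_kernel_prod_right (κ := κ1) ?_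
      exact Measurable.ite (measurableSet_le measurable_const hsing2)
        measurable_const measurable_const
    have hz : ∫⁻ ω, ∫⁻ y, (if 1 ≤ N' ω {y} then (0 : ℝ≥0∞) else 1) ∂(N' ω) ∂P = 0 := by
      rw [← hL, heq, hR]
    filter_upwards [(lintegral_eq_zero_iff M5).mp hz] with ω hω
    have hin : Measurable fun y => (if 1 ≤ N' ω {y} then (0 : ℝ≥0∞) else 1) := by
      haveI := hsf ω
      have hps : Measurable fun y : E => N' ω {y} :=
        measurable_pointMass (Kernel.const E (N' ω)) measurable_id
      exact Measurable.ite (measurableSet_le measurable_const hps)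
        measurable_const measurable_const
    have hae := (lintegral_eq_zero_iff hin).mp hω
    filter_upwards [hae] with y hy
    rw [dirac_le_iff]
    by_contra hc
    simp only [Pi.zero_apply] at hy
    rw [if_neg hc] at hy
    exact one_ne_zero hy
  -- Step H3
  have hmeasΦ : Measurable fun pr : Ω × E => (‖f (N pr.1) pr.2‖₊ : ℝ≥0∞) :=
    (hf.comp_measurable ((hN.comp measurable_fst).prodMk measurable_snd)).enorm
  have h3main : ∀ᵐ ω ∂P, Integrable (fun y => f (rmPt (N' ω) y) y) (N' ω) := by
    have heq := hMS (fun η y => (‖f η y‖₊ : ℝ≥0∞)) hf.enorm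
    have hRHS : ∫⁻ ω, ∫⁻ x, (‖f (N ω) x‖₊ : ℝ≥0∞) ∂μ ∂P < ∞ := by
      have h2 : ∫⁻ pr : Ω × E, (‖f (N pr.1) pr.2‖₊ : ℝ≥0∞) ∂(P.prod μ) < ∞ := hΦ.2
      rwa [lintegral_prod _ hmeasΦ.aemeasurable] at h2
    have hLHS : ∫⁻ ω, ∫⁻ y, (‖f (rmPt (N ω) y) y‖₊ : ℝ≥0∞) ∂(N ω) ∂P
        = ∫⁻ ω, ∫⁻ y, (‖f (rmPt (N' ω) y) y‖₊ : ℝ≥0∞) ∂(N' ω) ∂P := by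
      refine lintegral_congr_ae ?_
      filter_upwards [hgood] with ω hω
      rw [hω]
    have hfin : ∫⁻ ω, ∫⁻ y, (‖f (rmPt (N' ω) y) y‖₊ : ℝ≥0∞) ∂(N' ω) ∂P < ∞ := by
      rw [← hLHS, heq]; exact hRHS
    filter_upwards [ae_lt_top Mc hfin.ne] with ω hfl
    haveI := hsf ω
    have hps : Measurable fun y : E => N' ω {y} :=
      measurable_pointMass (Kernel.const E (N' ω)) measurable_id
    exact ⟨(hf.comp_measurable ((measurable_rmPt measurable_const measurable_id hps).prodMk
      measurable_id)).aestronglyMeasurable, hfl⟩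
  -- Step H1
  have h1main : ∀ᵐ ω ∂P, Integrable (fun y => f (N' ω) y) μ := by
    filter_upwards [hΦ.prod_right_ae, hgood] with ω h hω
    have h' : Integrable (fun y => f (N ω) y) μ := h
    rwa [hω] at h'
  -- per-x facts
  have hxmain : ∀ᵐ x ∂μ,
      (∀ᵐ ω ∂P, ∫⁻ y, (‖f (N' ω + Measure.dirac x) y‖₊ : ℝ≥0∞) ∂μ < ∞) ∧
      (∀ᵐ ω ∂P, ∫⁻ y, (‖f (rmPt (N' ω) y + Measure.dirac x) y‖₊ : ℝ≥0∞) ∂(N' ω) < ∞) := by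
    filter_upwards [hDΦ] with x hDx
    have hsum : Integrable (fun pr : Ω × E => f (N pr.1 + Measure.dirac x) pr.2) (P.prod μ) := by
      have h := hDx.add hΦ
      have he : ((fun pr : Ω × E => f (N pr.1 + Measure.dirac x) pr.2 - f (N pr.1) pr.2)
          + fun pr : Ω × E => f (N pr.1) pr.2)
          = fun pr : Ω × E => f (N pr.1 + Measure.dirac x) pr.2 := by
        ext pr; simp
      rwa [he] at h
    have hmeasx : Measurable fun pr : Ω × E => (‖f (N pr.1 + Measure.dirac x) pr.2‖₊ : ℝ≥0∞) :=
      (hf.comp_measurable ((measurable_addMeas (hN.comp measurable_fst)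
        measurable_const).prodMk measurable_snd)).enorm
    constructor
    · filter_upwards [hsum.prod_right_ae, hgood] with ω h hω
      have h' : Integrable (fun y => f (N ω + Measure.dirac x) y) μ := h
      rw [hω] at h'
      exact h'.2
    · have hgx : Measurable (Function.uncurry fun (η : Measure E) (y : E) =>
          (‖f (η + Measure.dirac x) y‖₊ : ℝ≥0∞)) :=
        (hf.comp_measurable ((measurable_addMeas measurable_fst
          measurable_const).prodMk measurable_snd)).enorm
      have heq := hMS _ hgx
      have hRHS : ∫⁻ ω, ∫⁻ z, (‖f (N ω + Measure.dirac x) z‖₊ : ℝ≥0∞) ∂μ ∂P < ∞ := by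
        have h2 : ∫⁻ pr : Ω × E,
            (‖f (N pr.1 + Measure.dirac x) pr.2‖₊ : ℝ≥0∞) ∂(P.prod μ) < ∞ := hsum.2
        rwa [lintegral_prod _ hmeasx.aemeasurable] at h2
      have hLHS : ∫⁻ ω, ∫⁻ y, (‖f (rmPt (N ω) y + Measure.dirac x) y‖₊ : ℝ≥0∞) ∂(N ω) ∂P
          = ∫⁻ ω, ∫⁻ y, (‖f (rmPt (N' ω) y + Measure.dirac x) y‖₊ : ℝ≥0∞) ∂(N' ω) ∂P := by
        refine lintegral_congr_ae ?_
        filter_upwards [hgood] with ω hω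
        rw [hω]
      have hfin : ∫⁻ ω, ∫⁻ y,
          (‖f (rmPt (N' ω) y + Measure.dirac x) y‖₊ : ℝ≥0∞) ∂(N' ω) ∂P < ∞ := by
        rw [← hLHS, heq]; exact hRHS
      have hMbx : Measurable fun ω =>
          ∫⁻ y, (‖f (rmPt (N' ω) y + Measure.dirac x) y‖₊ : ℝ≥0∞) ∂(N' ω) :=
        Mb.comp (measurable_id.prodMk measurable_const)
      exact ae_lt_top hMbx hfin.ne
  -- swaps
  have hswap2 : ∀ᵐ pr ∂(P.prod μ),
      ∫⁻ y, (‖f (N' pr.1 + Measure.dirac pr.2) y‖₊ : ℝ≥0∞) ∂μ < ∞ := by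
    have h' : ∀ᵐ x ∂μ, ∀ᵐ ω ∂P,
        ∫⁻ y, (‖f (N' ω + Measure.dirac x) y‖₊ : ℝ≥0∞) ∂μ < ∞ := hxmain.mono fun x h => h.1
    have hset : MeasurableSet {pr : Ω × E |
        ∫⁻ y, (‖f (N' pr.1 + Measure.dirac pr.2) y‖₊ : ℝ≥0∞) ∂μ < ∞} := Ma measurableSet_Iio
    rw [Measure.ae_prod_iff_ae_ae hset]
    exact (Measure.ae_ae_comm (μ := μ) (ν := P)
      (p := fun x ω => ∫⁻ y, (‖f (N' ω + Measure.dirac x) y‖₊ : ℝ≥0∞) ∂μ < ∞)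
      ((Ma.comp measurable_swap) measurableSet_Iio)).mp h'
  have hswap4 : ∀ᵐ pr ∂(P.prod μ),
      ∫⁻ y, (‖f (rmPt (N' pr.1) y + Measure.dirac pr.2) y‖₊ : ℝ≥0∞) ∂(N' pr.1) < ∞ := by
    have h' : ∀ᵐ x ∂μ, ∀ᵐ ω ∂P,
        ∫⁻ y, (‖f (rmPt (N' ω) y + Measure.dirac x) y‖₊ : ℝ≥0∞) ∂(N' ω) < ∞ :=
      hxmain.mono fun x h => h.2
    have hset : MeasurableSet {pr : Ω × E |
        ∫⁻ y, (‖f (rmPt (N' pr.1) y + Measure.dirac pr.2) y‖₊ : ℝ≥0∞) ∂(N' pr.1) < ∞} :=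
      Mb measurableSet_Iio
    rw [Measure.ae_prod_iff_ae_ae hset]
    exact (Measure.ae_ae_comm (μ := μ) (ν := P)
      (p := fun x ω => ∫⁻ y, (‖f (rmPt (N' ω) y + Measure.dirac x) y‖₊ : ℝ≥0∞) ∂(N' ω) < ∞)
      ((Mb.comp measurable_swap) measurableSet_Iio)).mp h'
  -- assemble
  have hlift1 : ∀ᵐ pr ∂(P.prod μ), N pr.1 = N' pr.1 ∧
      Integrable (fun y => f (N' pr.1) y) μ ∧
      Integrable (fun y => f (rmPt (N' pr.1) y) y) (N' pr.1) ∧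
      (∀ᵐ y ∂(N' pr.1), Measure.dirac y ≤ N' pr.1) := by
    exact Measure.quasiMeasurePreserving_fst.ae
      (p := fun ω => N ω = N' ω ∧ Integrable (fun y => f (N' ω) y) μ ∧
        Integrable (fun y => f (rmPt (N' ω) y) y) (N' ω) ∧
        ∀ᵐ y ∂(N' ω), Measure.dirac y ≤ N' ω)
      (by filter_upwards [hgood, h1main, h3main, h5main] with ω a b c d
          exact ⟨a, b, c, d⟩)
  filter_upwards [hlift1, hswap2, hswap4] with pr hl h2f h4f
  obtain ⟨hg, h1, h3, h5⟩ := hl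
  rw [hg]
  have h2 : Integrable (fun y => f (N' pr.1 + Measure.dirac pr.2) y) μ :=
    ⟨(hf.comp_measurable (measurable_const.prodMk measurable_id)).aestronglyMeasurable, h2f⟩
  have h4 : Integrable (fun y => f (rmPt (N' pr.1) y + Measure.dirac pr.2) y) (N' pr.1) := by
    haveI := hsf pr.1
    have hps : Measurable fun y : E => N' pr.1 {y} :=
      measurable_pointMass (Kernel.const E (N' pr.1)) measurable_id
    exact ⟨(hf.comp_measurable ((measurable_addMeas
      (measurable_rmPt measurable_const measurable_id hps) measurable_const).prodMk
        measurable_id)).aestronglyMeasurable, h4f⟩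
  exact key_pointwise μ f (N' pr.1) pr.2 h1 h2 h3 h4 h5
end

section
/- (Predictable integrands: $N$-integral equals pathwise integral.) In the space-time setting $E = [0,T]\times U$ with intensity $\lambda\otimes\nu$, for every predictable $\Phi \in L^1_{\mathrm{pr}}(\Omega_T\times U;H)$ one has $\int_0^T\int_U \varepsilon^-_{t,x}\Phi(t,x)\,N(dt,dx) = \int_0^T\int_U \Phi(t,x)\,N(dt,dx)$ in $L^1(\Omega;H)$, i.e. the pathwise Mecke-type integral of the previsible modification coincides with the Itô-type $L^1$ stochastic integral with respect to $N$. -/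
open MeasureTheory Filter
open scoped ENNReal RealInnerProductSpace

/-- The σ-algebra on `Ω` generated by the restriction of the Poisson random
measure `N` to `[0, u] × U`. -/
noncomputable def filtRaw {Ω U : Type*} [MeasurableSpace Ω] [MeasurableSpace U]
    (N : Ω → Measure (ℝ × U)) (u : ℝ) : MeasurableSpace Ω :=
  MeasurableSpace.comap
    (fun ω => (N ω).restrict (Set.Iic u ×ˢ (Set.univ : Set U))) inferInstance

/-- The right-continuous filtration `ℱ_t = ⋂_{u > t} ℱ_{[0,u] × U}`
generated by the Poisson random measure `N`. -/
noncomputable def filt {Ω U : Type*} [MeasurableSpace Ω] [MeasurableSpace U]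
    (N : Ω → Measure (ℝ × U)) (t : ℝ) : MeasurableSpace Ω :=
  ⨅ u ∈ Set.Ioi t, filtRaw N u

/-- The predictable σ-algebra `𝒫_T` on `Ω × ℝ` associated to the filtration
`(ℱ_t)`: generated by `F_r × (r, t]` with `F_r ∈ ℱ_r` and `F_0 × {0}`. -/
def predSigma {Ω U : Type*} [MeasurableSpace Ω] [MeasurableSpace U]
    (N : Ω → Measure (ℝ × U)) : MeasurableSpace (Ω × ℝ) :=
  MeasurableSpace.generateFrom
    ({s | ∃ (r t : ℝ) (A : Set Ω), r ≤ t ∧ MeasurableSet[filt N r] A ∧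
        s = A ×ˢ Set.Ioc r t}
      ∪ {s | ∃ A : Set Ω, MeasurableSet[filt N 0] A ∧ s = A ×ˢ ({0} : Set ℝ)})

/-- The σ-algebra `𝒫_T ⊗ ℬ(U)` on `Ω × ([0,T] × U)` of predictable random fields. -/
def predProd {Ω U : Type*} [MeasurableSpace Ω] [MeasurableSpace U]
    (N : Ω → Measure (ℝ × U)) : MeasurableSpace (Ω × (ℝ × U)) :=
  MeasurableSpace.comap (fun p : Ω × (ℝ × U) => ((p.1, p.2.1), p.2.2))
    ((predSigma N).prod inferInstance)

lemma rmPt_restrict {E : Type*} [MeasurableSpace E] (η : Measure E) (x : E)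
    {S : Set E} (hS : MeasurableSet S) (hx : x ∉ S) :
    (rmPt η x).restrict S = η.restrict S := by
  unfold rmPt
  split_ifs with h
  · ext s hs
    rw [Measure.restrict_apply hs, Measure.restrict_apply hs,
      Measure.sub_apply (hs.inter hS) h, Measure.dirac_apply' _ (hs.inter hS),
      Set.indicator_of_notMem (fun hmem => hx hmem.2), tsub_zero]
  · rfl

lemma measurable_restrict_measure {α : Type*} [MeasurableSpace α] {S : Set α}
    (hS : MeasurableSet S) :
    Measurable fun μ : Measure α => μ.restrict S :=
  Measure.measurable_of_measurable_coe _ fun s hs => by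
    simp_rw [Measure.restrict_apply hs]
    exact Measure.measurable_coe (hs.inter hS)

lemma indicator_one_le_one {γ : Type*} (s : Set γ) (x : γ) :
    s.indicator (1 : γ → ℝ≥0∞) x ≤ 1 := by
  classical
  by_cases h : x ∈ s <;> simp [h]

/-- For every predictable set there is an invariant representative indicator. -/
lemma exists_good_rep_set {Ω U : Type*} [MeasurableSpace Ω] [MeasurableSpace U]
    (N : Ω → Measure (ℝ × U)) (S : Set (Ω × (ℝ × U)))
    (hS : MeasurableSet[predProd N] S) :
    ∃ G : Measure (ℝ × U) → (ℝ × U) → ℝ≥0∞,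
      Measurable (Function.uncurry G) ∧ (∀ η x, G η x ≤ 1) ∧
      (∀ η (t : ℝ) (v : U), t ≠ 0 → G (rmPt η (t, v)) (t, v) = G η (t, v)) ∧
      (∀ ω (t : ℝ) (v : U), t ≠ 0 → G (N ω) (t, v) = S.indicator 1 (ω, (t, v))) := by
  classical
  set Good : Set (Ω × (ℝ × U)) → Prop := fun S =>
    ∃ G : Measure (ℝ × U) → (ℝ × U) → ℝ≥0∞,
      Measurable (Function.uncurry G) ∧ (∀ η x, G η x ≤ 1) ∧
      (∀ η (t : ℝ) (v : U), t ≠ 0 → G (rmPt η (t, v)) (t, v) = G η (t, v)) ∧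
      (∀ ω (t : ℝ) (v : U), t ≠ 0 → G (N ω) (t, v) = S.indicator 1 (ω, (t, v)))
    with hGood
  show Good S
  have h_empty : Good ∅ :=
    ⟨fun _ _ => 0, measurable_const, fun _ _ => zero_le_one, fun _ _ _ _ => rfl,
      fun ω t v ht => by simp⟩
  have h_compl : ∀ s, Good s → Good sᶜ := by
    rintro s ⟨G, hGm, hG1, hGi, hGr⟩
    refine ⟨fun η x => 1 - G η x,
      (show Measurable fun p => 1 - Function.uncurry G p from measurable_const.sub hGm), fun η x => tsub_le_self,
      fun η t v ht => ?_, fun ω t v ht => ?_⟩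
    · show 1 - G (rmPt η (t, v)) (t, v) = 1 - G η (t, v)
      rw [hGi η t v ht]
    · show 1 - G (N ω) (t, v) = sᶜ.indicator 1 (ω, (t, v))
      rw [hGr ω t v ht]
      by_cases h : (ω, (t, v)) ∈ s
      · simp [h]
      · simp [h]
  have h_iUnion : ∀ s : ℕ → Set (Ω × (ℝ × U)), (∀ i, Good (s i)) → Good (⋃ i, s i) := by
    intro s hs
    choose G hGm hG1 hGi hGr using hs
    refine ⟨fun η x => ⨆ i, G i η x, Measurable.iSup fun i => hGm i,
      fun η x => iSup_le fun i => hG1 i η x, fun η t v ht => ?_, fun ω t v ht => ?_⟩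
    · show ⨆ i, G i (rmPt η (t, v)) (t, v) = ⨆ i, G i η (t, v)
      simp_rw [fun i => hGi i η t v ht]
    · show ⨆ i, G i (N ω) (t, v) = (⋃ i, s i).indicator 1 (ω, (t, v))
      by_cases h : (ω, (t, v)) ∈ ⋃ i, s i
      · rw [Set.indicator_of_mem h]
        obtain ⟨i, hi⟩ := Set.mem_iUnion.mp h
        refine le_antisymm (iSup_le fun i => hG1 i _ _) ?_
        refine le_iSup_of_le i ?_
        rw [hGr i ω t v ht, Set.indicator_of_mem hi]
      · rw [Set.indicator_of_notMem h]
        have h0 : ∀ i, G i (N ω) (t, v) = 0 := fun i => by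
          rw [hGr i ω t v ht,
            Set.indicator_of_notMem (fun hi => h (Set.mem_iUnion.mpr ⟨i, hi⟩))]
        simp [h0]
  -- unpack the comap
  obtain ⟨S', hS', rfl⟩ := hS
  set e : Ω × (ℝ × U) → (Ω × ℝ) × U := fun p => ((p.1, p.2.1), p.2.2) with he
  let m' : MeasurableSpace ((Ω × ℝ) × U) :=
    { MeasurableSet' := fun t => Good (e ⁻¹' t)
      measurableSet_empty := by simpa using h_empty
      measurableSet_compl := fun t ht => by
        show Good (e ⁻¹' tᶜ)
        rw [Set.preimage_compl]
        exact h_compl _ ht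
      measurableSet_iUnion := fun t ht => by
        show Good (e ⁻¹' ⋃ i, t i)
        rw [Set.preimage_iUnion]
        exact h_iUnion _ ht }
  have hle : (predSigma N).prod inferInstance ≤ m' := by
    refine sup_le ?_ ?_
    · -- comap fst (predSigma N) ≤ m'
      rintro t ⟨s₁, hs₁, rfl⟩
      let m'' : MeasurableSpace (Ω × ℝ) :=
        { MeasurableSet' := fun s₁ => Good (e ⁻¹' (Prod.fst ⁻¹' s₁))
          measurableSet_empty := by simpa using h_empty
          measurableSet_compl := fun t ht => by
            show Good (e ⁻¹' (Prod.fst ⁻¹' tᶜ))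
            rw [Set.preimage_compl, Set.preimage_compl]
            exact h_compl _ ht
          measurableSet_iUnion := fun t ht => by
            show Good (e ⁻¹' (Prod.fst ⁻¹' ⋃ i, t i))
            rw [Set.preimage_iUnion, Set.preimage_iUnion]
            exact h_iUnion _ ht }
      have hps : predSigma N ≤ m'' := by
        rw [predSigma]
        refine MeasurableSpace.generateFrom_le ?_
        rintro g (⟨r, t', A, hrt, hA, rfl⟩ | ⟨A, hA, rfl⟩)
        · -- case A ×ˢ Ioc r t'
          show Good _
          have hAq : ∀ q : {q : ℚ // r < (q : ℝ)}, MeasurableSet[filtRaw N (q : ℝ)] A := by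
            intro q
            have hle' : filt N r ≤ filtRaw N (q : ℝ) := by
              rw [filt]
              exact iInf₂_le (q : ℝ) q.2
            exact hle' A hA
          choose B hB hBpre using fun q => hAq q
          have hSmem : ∀ p : Ω × (ℝ × U),
              p ∈ e ⁻¹' (Prod.fst ⁻¹' (A ×ˢ Set.Ioc r t')) ↔ p.1 ∈ A ∧ p.2.1 ∈ Set.Ioc r t' :=
            fun p => Iff.rfl
          have hωA : ∀ ω (q : {q : ℚ // r < (q : ℝ)}),
              ((N ω).restrict (Set.Iic (q : ℝ) ×ˢ (Set.univ : Set U)) ∈ B q) ↔ ω ∈ A := by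
            intro ω q
            rw [← hBpre q]
            rfl
          refine ⟨fun η x =>
              ⨆ q : {q : ℚ // r < (q : ℝ)},
                (B q).indicator 1 (η.restrict (Set.Iic (q : ℝ) ×ˢ (Set.univ : Set U)))
                  * (Set.Ioc (q : ℝ) t').indicator 1 x.1, ?_, ?_, ?_, ?_⟩
          · refine Measurable.iSup fun q => Measurable.mul ?_ ?_
            · exact (measurable_one.indicator (hB q)).comp
                ((measurable_restrict_measure (measurableSet_Iic.prod .univ)).comp measurable_fst)
            · exact (measurable_one.indicator measurableSet_Ioc).comp
                (measurable_fst.comp measurable_snd)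
          · intro η x
            refine iSup_le fun q => ?_
            calc _ ≤ 1 * 1 := mul_le_mul' (indicator_one_le_one _ _) (indicator_one_le_one _ _)
            _ = 1 := one_mul 1
          · intro η t v ht
            show ⨆ q : {q : ℚ // r < (q : ℝ)}, _ = ⨆ q : {q : ℚ // r < (q : ℝ)}, _
            congr 1
            funext q
            by_cases hmem : (t, v).1 ∈ Set.Ioc (q : ℝ) t'
            · have hnot : (t, v) ∉ Set.Iic (q : ℝ) ×ˢ (Set.univ : Set U) := by
                intro hc
                exact absurd hc.1 (not_le.mpr hmem.1)
              rw [rmPt_restrict _ _ (measurableSet_Iic.prod .univ) hnot]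
            · rw [Set.indicator_of_notMem hmem, mul_zero, mul_zero]
          · intro ω t v ht
            show ⨆ q : {q : ℚ // r < (q : ℝ)}, _ = _
            by_cases hA' : ω ∈ A
            · by_cases ht' : t ∈ Set.Ioc r t'
              · rw [Set.indicator_of_mem ((hSmem (ω, (t, v))).mpr ⟨hA', ht'⟩)]
                obtain ⟨q, hq1, hq2⟩ := exists_rat_btwn ht'.1
                refine le_antisymm (iSup_le fun q => ?_) ?_
                · calc _ ≤ 1 * 1 :=
                      mul_le_mul' (indicator_one_le_one _ _) (indicator_one_le_one _ _)
                  _ = 1 := one_mul 1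
                · refine le_iSup_of_le ⟨q, hq1⟩ ?_
                  rw [Set.indicator_of_mem ((hωA ω ⟨q, hq1⟩).mpr hA')]
                  rw [Set.indicator_of_mem
                    (show (t, v).1 ∈ Set.Ioc ((⟨q, hq1⟩ : {q : ℚ // r < (q : ℝ)}) : ℝ) t' from
                      Set.mem_Ioc.mpr ⟨hq2, ht'.2⟩)]
                  simp
              · rw [Set.indicator_of_notMem (fun hc => ht' ((hSmem (ω, (t, v))).mp hc).2)]
                refine le_antisymm (iSup_le fun q => ?_) zero_le
                by_cases hmem : (t, v).1 ∈ Set.Ioc (q : ℝ) t'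
                · exact absurd (Set.mem_Ioc.mpr ⟨lt_trans q.2 hmem.1, hmem.2⟩) ht'
                · rw [Set.indicator_of_notMem hmem, mul_zero]
            · rw [Set.indicator_of_notMem (fun hc => hA' ((hSmem (ω, (t, v))).mp hc).1)]
              refine le_antisymm (iSup_le fun q => ?_) zero_le
              rw [Set.indicator_of_notMem (fun hc => hA' ((hωA ω q).mp hc)), zero_mul]
        · -- case A ×ˢ {0}
          show Good _
          refine ⟨fun _ _ => 0, measurable_const, fun _ _ => zero_le_one,
            fun _ _ _ _ => rfl, fun ω t v ht => ?_⟩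
          have hnot : (ω, (t, v)) ∉ e ⁻¹' (Prod.fst ⁻¹' (A ×ˢ ({0} : Set ℝ))) := by
            intro hc
            exact ht hc.2
          rw [Set.indicator_of_notMem hnot]
      exact hps s₁ hs₁
    · -- comap snd ≤ m'
      rintro t ⟨C, hC, rfl⟩
      show Good _
      refine ⟨fun _ x => C.indicator 1 x.2,
        (measurable_one.indicator hC).comp (measurable_snd.comp measurable_snd),
        fun _ x => indicator_one_le_one _ _, fun _ _ _ _ => rfl, fun ω t v ht => ?_⟩
      show C.indicator 1 (t, v).2 = (e ⁻¹' (Prod.snd ⁻¹' C)).indicator 1 (ω, (t, v))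
      by_cases h : v ∈ C
      · rw [Set.indicator_of_mem (show v ∈ C from h),
          Set.indicator_of_mem (show (ω, (t, v)) ∈ e ⁻¹' (Prod.snd ⁻¹' C) from h)]
        rfl
      · rw [Set.indicator_of_notMem (show v ∉ C from h),
          Set.indicator_of_notMem (show (ω, (t, v)) ∉ e ⁻¹' (Prod.snd ⁻¹' C) from h)]
  exact hle S' hS'

/-- Every predictable strongly measurable `Φ` has an invariant representative `F`. -/
lemma exists_good_rep {Ω U H : Type*} [MeasurableSpace Ω] [MeasurableSpace U]
    [NormedAddCommGroup H] [NormedSpace ℝ H] [CompleteSpace H]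
    (N : Ω → Measure (ℝ × U)) (Φ : Ω × (ℝ × U) → H)
    (hpred : StronglyMeasurable[predProd N] Φ) :
    ∃ F : Measure (ℝ × U) → (ℝ × U) → H,
      StronglyMeasurable (Function.uncurry F) ∧
      (∀ η (t : ℝ) (v : U), t ≠ 0 → F (rmPt η (t, v)) (t, v) = F η (t, v)) ∧
      (∀ ω (t : ℝ) (v : U), t ≠ 0 → F (N ω) (t, v) = Φ (ω, (t, v))) := by
  classical
  letI : MeasurableSpace (Ω × (ℝ × U)) := predProd N
  set φ := fun n => hpred.approx n with hφ
  have hfib : ∀ (n : ℕ) (c : H),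
      ∃ G : Measure (ℝ × U) → (ℝ × U) → ℝ≥0∞,
        Measurable (Function.uncurry G) ∧ (∀ η x, G η x ≤ 1) ∧
        (∀ η (t : ℝ) (v : U), t ≠ 0 → G (rmPt η (t, v)) (t, v) = G η (t, v)) ∧
        (∀ ω (t : ℝ) (v : U), t ≠ 0 →
          G (N ω) (t, v) = (⇑(φ n) ⁻¹' {c}).indicator 1 (ω, (t, v))) :=
    fun n c => exists_good_rep_set N _ (SimpleFunc.measurableSet_fiber (φ n) c)
  choose G hGm hG1 hGi hGr using hfib
  set Fn : ℕ → Measure (ℝ × U) → (ℝ × U) → H :=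
    fun n η x => ∑ c ∈ (φ n).range, (G n c η x).toReal • c with hFn
  have hFnm : ∀ n, StronglyMeasurable (Function.uncurry (Fn n)) := by
    intro n
    have : Function.uncurry (Fn n) =
        fun p => ∑ c ∈ (φ n).range, (Function.uncurry (G n c) p).toReal • c := rfl
    rw [this]
    exact Finset.stronglyMeasurable_fun_sum _ fun c _ =>
      ((hGm n c).ennreal_toReal).stronglyMeasurable.smul_const c
  have hFni : ∀ n η (t : ℝ) (v : U), t ≠ 0 →
      Fn n (rmPt η (t, v)) (t, v) = Fn n η (t, v) := by
    intro n η t v ht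
    show ∑ c ∈ (φ n).range, (G n c (rmPt η (t, v)) (t, v)).toReal • c = _
    refine Finset.sum_congr rfl fun c _ => ?_
    rw [hGi n c η t v ht]
  have hFnr : ∀ n ω (t : ℝ) (v : U), t ≠ 0 →
      Fn n (N ω) (t, v) = φ n (ω, (t, v)) := by
    intro n ω t v ht
    show ∑ c ∈ (φ n).range, (G n c (N ω) (t, v)).toReal • c = _
    have hterm : ∀ c, (G n c (N ω) (t, v)).toReal • c
        = ((⇑(φ n) ⁻¹' {c}).indicator (1 : (Ω × (ℝ × U)) → ℝ≥0∞) (ω, (t, v))).toReal • c :=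
      fun c => by rw [hGr n c ω t v ht]
    simp_rw [hterm]
    rw [Finset.sum_eq_single_of_mem (φ n (ω, (t, v))) (SimpleFunc.mem_range_self _ _)]
    · rw [Set.indicator_of_mem (show (ω, (t, v)) ∈ ⇑(φ n) ⁻¹' {φ n (ω, (t, v))} from rfl)]
      simp
    · intro c _ hc
      have hnm : (ω, (t, v)) ∉ ⇑(φ n) ⁻¹' {c} :=
        fun hmem => hc (Set.mem_singleton_iff.mp hmem).symm
      rw [Set.indicator_of_notMem hnm]
      simp
  -- pointwise limit
  set limFn : (ℕ → H) → H := fun a =>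
    if h : ∃ L, Tendsto a atTop (nhds L) then h.choose else 0 with hlimFn
  set F : Measure (ℝ × U) → (ℝ × U) → H := fun η x => limFn (fun n => Fn n η x) with hF
  have hlim_spec : ∀ (a : ℕ → H) (L : H), Tendsto a atTop (nhds L) → limFn a = L := by
    intro a L hL
    have hex : ∃ L, Tendsto a atTop (nhds L) := ⟨L, hL⟩
    rw [hlimFn]
    simp only
    rw [dif_pos hex]
    exact tendsto_nhds_unique hex.choose_spec hL
  refine ⟨F, ?_, ?_, ?_⟩
  · -- strong measurability
    set Conv : Set (Measure (ℝ × U) × (ℝ × U)) :=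
      {p | ∃ L, Tendsto (fun n => Fn n p.1 p.2) atTop (nhds L)} with hConv
    have hConvm : MeasurableSet Conv := by
      have hCeq : Conv = ⋂ (k : ℕ), ⋃ (M : ℕ), ⋂ (m : ℕ) (_ : m ≥ M) (n : ℕ) (_ : n ≥ M),
          {p : Measure (ℝ × U) × (ℝ × U) |
            dist (Fn m p.1 p.2) (Fn n p.1 p.2) < 1 / (k + 1)} := by
        ext p
        simp only [Set.mem_iInter, Set.mem_iUnion, Set.mem_setOf_eq, hConv]
        constructor
        · rintro ⟨L, hL⟩ k
          have hc : CauchySeq (fun n => Fn n p.1 p.2) := hL.cauchySeq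
          have hpos : (0 : ℝ) < 1 / (k + 1) := by positivity
          obtain ⟨M, hM⟩ := Metric.cauchySeq_iff.mp hc _ hpos
          exact ⟨M, fun m hm n hn => hM m hm n hn⟩
        · intro h
          apply cauchySeq_tendsto_of_complete
          rw [Metric.cauchySeq_iff]
          intro ε hε
          obtain ⟨k, hk⟩ := exists_nat_one_div_lt hε
          obtain ⟨M, hM⟩ := h k
          exact ⟨M, fun m hm n hn => lt_trans (hM m hm n hn) hk⟩
      rw [hCeq]
      refine MeasurableSet.iInter fun k => MeasurableSet.iUnion fun M =>
        MeasurableSet.iInter fun m => MeasurableSet.iInter fun _ =>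
        MeasurableSet.iInter fun n => MeasurableSet.iInter fun _ => ?_
      have hd : StronglyMeasurable
          (fun p : Measure (ℝ × U) × (ℝ × U) => dist (Fn m p.1 p.2) (Fn n p.1 p.2)) :=
        (hFnm m).dist (hFnm n)
      exact measurableSet_lt hd.measurable measurable_const
    have htend : ∀ p : Measure (ℝ × U) × (ℝ × U),
        Tendsto (fun n => Conv.indicator (fun p => Fn n p.1 p.2) p) atTop
          (nhds (Function.uncurry F p)) := by
      intro p
      by_cases hp : p ∈ Conv
      · have hp' : ∃ L, Tendsto (fun n => Fn n p.1 p.2) atTop (nhds L) := hp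
        have heqF : Function.uncurry F p = hp'.choose := by
          show limFn _ = _
          rw [hlimFn]
          simp only
          rw [dif_pos hp']
        rw [heqF]
        have := hp'.choose_spec
        simpa [Set.indicator_of_mem hp] using this
      · have hp' : ¬∃ L, Tendsto (fun n => Fn n p.1 p.2) atTop (nhds L) := hp
        have heqF : Function.uncurry F p = 0 := by
          show limFn _ = _
          rw [hlimFn]
          simp only
          rw [dif_neg hp']
        rw [heqF]
        simp [Set.indicator_of_notMem hp]
    exact stronglyMeasurable_of_tendsto atTop
      (fun n => ((hFnm n).indicator hConvm)) (tendsto_pi_nhds.mpr htend)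
  · -- invariance
    intro η t v ht
    show limFn (fun n => Fn n (rmPt η (t, v)) (t, v)) = limFn (fun n => Fn n η (t, v))
    congr 1
    funext n
    exact hFni n η t v ht
  · -- representation
    intro ω t v ht
    show limFn (fun n => Fn n (N ω) (t, v)) = Φ (ω, (t, v))
    have hseq : (fun n => Fn n (N ω) (t, v)) = fun n => φ n (ω, (t, v)) := by
      funext n
      exact hFnr n ω t v ht
    rw [hseq]
    exact hlim_spec _ _ (hpred.tendsto_approx (ω, (t, v)))

/-- Squeeze: if `g ≤ h` pointwise, `h` measurable with equal finite lintegrals, then `g = h` a.e. -/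
lemma squeeze_ae_eq {α : Type*} [MeasurableSpace α] {μ : Measure α} {g h : α → ℝ≥0∞}
    (hh : Measurable h) (hle : ∀ a, g a ≤ h a)
    (heq : ∫⁻ a, g a ∂μ = ∫⁻ a, h a ∂μ) (hfin : ∫⁻ a, h a ∂μ ≠ ⊤) :
    ∀ᵐ a ∂μ, g a = h a := by
  obtain ⟨g', hg'm, hg'le, hg'eq⟩ := exists_measurable_le_lintegral_eq μ g
  have hg'h : ∀ a, g' a ≤ h a := fun a => (hg'le a).trans (hle a)
  have hint : ∫⁻ a, g' a ∂μ = ∫⁻ a, h a ∂μ := by rw [← hg'eq, heq]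
  have hfin' : ∫⁻ a, g' a ∂μ ≠ ⊤ := by rw [hint]; exact hfin
  have hsub : ∫⁻ a, h a - g' a ∂μ = 0 := by
    rw [lintegral_sub hg'm hfin' (Filter.Eventually.of_forall hg'h), hint, tsub_self]
  have h0 : ∀ᵐ a ∂μ, h a - g' a = 0 :=
    (lintegral_eq_zero_iff (hh.sub hg'm)).mp hsub
  filter_upwards [h0] with a ha
  have : h a ≤ g' a := tsub_eq_zero_iff_le.mp ha
  exact le_antisymm (hle a) (le_trans this (hg'le a))

/-- **Predictable integrands: pathwise Mecke-type integral = Itô-type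
`N`-integral.**  In the space-time setting `E = [0,T] × U`, intensity `λ ⊗ ν`,
for every predictable `Φ ∈ L¹_{pr}(Ω_T × U;H)` (with representative `f`) the
pathwise integral of `ε⁻ Φ` w.r.t. `N` coincides a.s. (hence in `L¹(Ω;H)`) with
the pathwise integral of the predictable version `Φ` itself, which is the Itô
`L¹`-integral `I^N_T(Φ)`. -/
theorem predictable_pathwise_eq_ito_N
    {Ω U H : Type*} [MeasurableSpace Ω] [MeasurableSpace U]
    [NormedAddCommGroup H] [InnerProductSpace ℝ H] [CompleteSpace H]
    [TopologicalSpace.SeparableSpace H]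
    (P : Measure Ω) [IsProbabilityMeasure P]
    (T : ℝ) (hT : 0 < T) (ν : Measure U) [SigmaFinite ν]
    (μST : Measure (ℝ × U))
    (hμ : μST = ((volume : Measure ℝ).restrict (Set.Icc 0 T)).prod ν)
    (N : Ω → Measure (ℝ × U)) (hMS : MeckeSub P μST N) (hN : Measurable N)
    (Φ : Ω × (ℝ × U) → H) (hpred : StronglyMeasurable[predProd N] Φ)
    (f : Measure (ℝ × U) → (ℝ × U) → H)
    (hf : StronglyMeasurable (Function.uncurry f))
    (hrep : ∀ᵐ pr ∂(P.prod μST), Φ pr = f (N pr.1) pr.2)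
    (hint : Integrable Φ (P.prod μST)) :
    ∀ᵐ ω ∂P, ∫ x, f (rmPt (N ω) x) x ∂(N ω) = ∫ x, Φ (ω, x) ∂(N ω) := by
  classical
  subst hμ
  set μ : Measure (ℝ × U) := ((volume : Measure ℝ).restrict (Set.Icc 0 T)).prod ν with hμdef
  obtain ⟨F, hFm, hFinv, hFrep⟩ := exists_good_rep N Φ hpred
  -- basic sets
  set Out : Set (ℝ × U) := (Set.Icc (0 : ℝ) T ×ˢ (Set.univ : Set U))ᶜ with hOut
  have hOutm : MeasurableSet Out := (measurableSet_Icc.prod MeasurableSet.univ).compl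
  set Zero : Set (ℝ × U) := ({0} : Set ℝ) ×ˢ (Set.univ : Set U) with hZero
  have hZerom : MeasurableSet Zero := (measurableSet_singleton 0).prod MeasurableSet.univ
  set Ej : ℕ → Set (ℝ × U) := fun j => Set.Icc (0 : ℝ) T ×ˢ spanningSets ν j with hEj
  have hEjm : ∀ j, MeasurableSet (Ej j) :=
    fun j => measurableSet_Icc.prod (measurableSet_spanningSets ν j)
  have hμOut : μ Out = 0 := by
    have hOeq : Out = (Set.Icc (0 : ℝ) T)ᶜ ×ˢ (Set.univ : Set U) := by
      ext p
      simp [hOut, Set.mem_prod]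
    rw [hOeq, hμdef, Measure.prod_prod, Measure.restrict_apply measurableSet_Icc.compl]
    simp
  have hμZero : μ Zero = 0 := by
    rw [hZero, hμdef, Measure.prod_prod, Measure.restrict_apply (measurableSet_singleton 0)]
    have h0 : (volume : Measure ℝ) (({0} : Set ℝ) ∩ Set.Icc 0 T) = 0 :=
      measure_mono_null Set.inter_subset_left Real.volume_singleton
    rw [h0, zero_mul]
  have hμEj : ∀ j, μ (Ej j) ≠ ⊤ := by
    intro j
    rw [hEj]
    simp only
    rw [hμdef, Measure.prod_prod]
    have h1 : ((volume : Measure ℝ).restrict (Set.Icc 0 T)) (Set.Icc 0 T) < ⊤ := by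
      rw [Measure.restrict_apply measurableSet_Icc, Set.inter_self, Real.volume_Icc]
      exact ENNReal.ofReal_lt_top
    exact (ENNReal.mul_lt_top h1 (measure_spanningSets_lt_top ν j)).ne
  -- the "good" set where f and F agree
  set Bc : Set (Measure (ℝ × U) × (ℝ × U)) :=
    {p | f p.1 p.2 = F p.1 p.2} with hBc
  have hBcm : MeasurableSet Bc := by
    have hBeq : Bc = {p : Measure (ℝ × U) × (ℝ × U) |
        Function.uncurry f p = Function.uncurry F p} := by
      ext p
      simp [hBc, Function.uncurry]
    rw [hBeq]
    exact hf.measurableSet_eq_fun hFm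
  -- a.e. with respect to P ⊗ μ, f (N ω) x = F (N ω) x
  have hae0 : ∀ᵐ z ∂(P.prod μ), z.2.1 ≠ 0 := by
    rw [ae_iff]
    have hset : {z : Ω × (ℝ × U) | ¬ z.2.1 ≠ 0} ⊆ Set.univ ×ˢ Zero := by
      intro z hz
      simp only [Set.mem_setOf_eq, not_not] at hz
      exact Set.mem_prod.mpr ⟨Set.mem_univ _, Set.mem_prod.mpr ⟨hz, Set.mem_univ _⟩⟩
    refine measure_mono_null hset ?_
    rw [Measure.prod_prod, hμZero, mul_zero]
  have hrepF : ∀ᵐ z ∂(P.prod μ), f (N z.1) z.2 = F (N z.1) z.2 := by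
    filter_upwards [hrep, hae0] with z h1 h2
    have h3 := hFrep z.1 z.2.1 z.2.2 h2
    simp only [Prod.mk.eta] at h3
    rw [h1] at h3
    exact h3.symm
  -- Mecke with x-only test functions: intensity identity
  have hind : ∀ s : Set (ℝ × U), MeasurableSet s → ∫⁻ ω, N ω s ∂P = μ s := by
    intro s hs
    have hM := hMS (fun _ x => s.indicator 1 x)
      ((measurable_one.indicator hs).comp measurable_snd)
    simp only [lintegral_indicator_one hs] at hM
    rw [hM, lintegral_const, measure_univ, mul_one]
  have hNout : ∀ᵐ ω ∂P, N ω Out = 0 := by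
    have h := hind Out hOutm
    rw [hμOut] at h
    have := (lintegral_eq_zero_iff ((Measure.measurable_coe hOutm).comp hN)).mp h
    filter_upwards [this] with ω hω using hω
  have hNzero : ∀ᵐ ω ∂P, N ω Zero = 0 := by
    have h := hind Zero hZerom
    rw [hμZero] at h
    have := (lintegral_eq_zero_iff ((Measure.measurable_coe hZerom).comp hN)).mp h
    filter_upwards [this] with ω hω using hω
  have hNEj_fin : ∀ j, ∀ᵐ ω ∂P, N ω (Ej j) ≠ ⊤ := by
    intro j
    have h := ae_lt_top
      (show Measurable fun ω => N ω (Ej j) from (Measure.measurable_coe (hEjm j)).comp hN)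
      (by rw [hind (Ej j) (hEjm j)]; exact hμEj j)
    filter_upwards [h] with ω hω using hω.ne
  -- the main Mecke test functions
  set k : ℕ → Measure (ℝ × U) → (ℝ × U) → ℝ≥0∞ := fun j η x =>
    Bc.indicator 1 (η, x) * (Ej j).indicator 1 x with hk
  have hkm : ∀ j, Measurable (Function.uncurry (k j)) := fun j =>
    ((measurable_one.indicator hBcm).comp (measurable_fst.prodMk measurable_snd)).mul
      ((measurable_one.indicator (hEjm j)).comp measurable_snd)
  have hkle : ∀ j η x, k j η x ≤ (Ej j).indicator 1 x := by
    intro j η x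
    rw [hk]
    simp only
    calc Bc.indicator 1 (η, x) * (Ej j).indicator 1 x
        ≤ 1 * (Ej j).indicator 1 x := mul_le_mul' (indicator_one_le_one _ _) le_rfl
      _ = (Ej j).indicator 1 x := one_mul _
  have hRHSj : ∀ j, ∫⁻ ω, ∫⁻ x, k j (N ω) x ∂μ ∂P = μ (Ej j) := by
    intro j
    have hmeas : Measurable fun z : Ω × (ℝ × U) => k j (N z.1) z.2 :=
      (hkm j).comp ((hN.comp measurable_fst).prodMk measurable_snd)
    rw [← lintegral_prod _ hmeas.aemeasurable]
    have hcong : ∀ᵐ z ∂(P.prod μ), k j (N z.1) z.2 = (Ej j).indicator 1 z.2 := by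
      filter_upwards [hrepF] with z hz
      rw [hk]
      simp only
      rw [Set.indicator_of_mem (show (N z.1, z.2) ∈ Bc from hz), Pi.one_apply, one_mul]
    rw [lintegral_congr_ae hcong]
    have hswap : ∀ z : Ω × (ℝ × U), (Ej j).indicator (1 : (ℝ × U) → ℝ≥0∞) z.2
        = (Set.univ ×ˢ Ej j).indicator (1 : (Ω × (ℝ × U)) → ℝ≥0∞) z := by
      intro z
      by_cases hz : z.2 ∈ Ej j
      · rw [Set.indicator_of_mem hz, Set.indicator_of_mem (Set.mem_prod.mpr ⟨Set.mem_univ _, hz⟩)]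
        rfl
      · rw [Set.indicator_of_notMem hz,
          Set.indicator_of_notMem (fun hc => hz (Set.mem_prod.mp hc).2)]
    simp_rw [hswap]
    rw [lintegral_indicator_one (MeasurableSet.univ.prod (hEjm j)), Measure.prod_prod,
      measure_univ, one_mul]
  have hLHSj : ∀ j, ∫⁻ ω, ∫⁻ x, k j (rmPt (N ω) x) x ∂(N ω) ∂P = μ (Ej j) := fun j =>
    (hMS (k j) (hkm j)).trans (hRHSj j)
  have hsq : ∀ j, ∀ᵐ ω ∂P, ∫⁻ x, k j (rmPt (N ω) x) x ∂(N ω) = N ω (Ej j) := by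
    intro j
    refine squeeze_ae_eq ((Measure.measurable_coe (hEjm j)).comp hN) ?_ ?_ ?_
    · intro ω
      calc ∫⁻ x, k j (rmPt (N ω) x) x ∂(N ω)
          ≤ ∫⁻ x, (Ej j).indicator 1 x ∂(N ω) := lintegral_mono fun x => hkle j _ x
        _ = N ω (Ej j) := lintegral_indicator_one (hEjm j)
    · exact (hLHSj j).trans (hind (Ej j) (hEjm j)).symm
    · rw [hind (Ej j) (hEjm j)]
      exact hμEj j
  -- combine everything ω-a.e.
  filter_upwards [hNout, hNzero, ae_all_iff.mpr hsq, ae_all_iff.mpr hNEj_fin]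
    with ω h2 h3 h4 h5
  -- per-j null covers
  have hmj : ∀ j, ∃ m : Set (ℝ × U), N ω m = 0 ∧
      ∀ x, x ∈ Ej j → x ∉ m → f (rmPt (N ω) x) x = F (rmPt (N ω) x) x := by
    intro j
    obtain ⟨g, hgm, hgle, hgeq⟩ := exists_measurable_le_lintegral_eq (N ω)
      (fun x => k j (rmPt (N ω) x) x)
    have hgle' : ∀ x, g x ≤ (Ej j).indicator 1 x := fun x => (hgle x).trans (hkle j _ x)
    have heq2 : ∫⁻ x, g x ∂(N ω) = ∫⁻ x, (Ej j).indicator 1 x ∂(N ω) := by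
      rw [← hgeq, h4 j, lintegral_indicator_one (hEjm j)]
    have hfin2 : ∫⁻ x, (Ej j).indicator (1 : (ℝ × U) → ℝ≥0∞) x ∂(N ω) ≠ ⊤ := by
      rw [lintegral_indicator_one (hEjm j)]
      exact h5 j
    have hae : ∀ᵐ x ∂(N ω), g x = (Ej j).indicator 1 x :=
      squeeze_ae_eq (measurable_one.indicator (hEjm j)) hgle' heq2 hfin2
    refine ⟨{x | ¬ g x = (Ej j).indicator 1 x}, by rw [ae_iff] at hae; exact hae, ?_⟩
    intro x hxE hxm
    simp only [Set.mem_setOf_eq, not_not] at hxm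
    have hgx : g x = 1 := by rw [hxm, Set.indicator_of_mem hxE, Pi.one_apply]
    have hk1 : (1 : ℝ≥0∞) ≤ k j (rmPt (N ω) x) x := by
      rw [← hgx]
      exact hgle x
    have hmem : (rmPt (N ω) x, x) ∈ Bc := by
      by_contra hno
      rw [hk, ] at hk1
      simp only [Set.indicator_of_notMem hno, zero_mul] at hk1
      exact (by simp : ¬ (1 : ℝ≥0∞) ≤ 0) hk1
    exact hmem
  choose m hm0 hmP using hmj
  -- the bad set is covered by a null set
  have hbad : {x : ℝ × U | ¬ f (rmPt (N ω) x) x = F (N ω) x} ⊆ Zero ∪ Out ∪ ⋃ j, m j := by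
    intro x hx
    by_cases hxz : x ∈ Zero
    · exact Or.inl (Or.inl hxz)
    by_cases hxo : x ∈ Out
    · exact Or.inl (Or.inr hxo)
    have hx1 : x.1 ≠ 0 := fun h0 => hxz (Set.mem_prod.mpr ⟨h0, Set.mem_univ _⟩)
    have hxI : x ∈ Set.Icc (0 : ℝ) T ×ˢ (Set.univ : Set U) := not_not.mp (by
      rw [hOut] at hxo
      simpa using hxo)
    have hx2 : x.2 ∈ ⋃ j, spanningSets ν j := by
      rw [iUnion_spanningSets]
      exact Set.mem_univ _
    obtain ⟨j, hj⟩ := Set.mem_iUnion.mp hx2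
    have hxE : x ∈ Ej j := Set.mem_prod.mpr ⟨(Set.mem_prod.mp hxI).1, hj⟩
    refine Or.inr (Set.mem_iUnion.mpr ⟨j, ?_⟩)
    by_contra hxm
    have heq := hmP j x hxE hxm
    have hinv := hFinv (N ω) x.1 x.2 hx1
    rw [Prod.mk.eta] at hinv
    exact hx (heq.trans hinv)
  have hcovnull : N ω (Zero ∪ Out ∪ ⋃ j, m j) = 0 :=
    measure_union_null (measure_union_null h3 h2) (measure_iUnion_null hm0)
  have e2 : (fun x => f (rmPt (N ω) x) x) =ᵐ[N ω] fun x => F (N ω) x := by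
    rw [Filter.EventuallyEq, ae_iff]
    exact measure_mono_null hbad hcovnull
  have e1 : (fun x : ℝ × U => Φ (ω, x)) =ᵐ[N ω] fun x => F (N ω) x := by
    rw [Filter.EventuallyEq, ae_iff]
    refine measure_mono_null ?_ h3
    intro x hx
    simp only [Set.mem_setOf_eq] at hx
    by_contra hxz
    have hx1 : x.1 ≠ 0 := fun h0 => hxz (Set.mem_prod.mpr ⟨h0, Set.mem_univ _⟩)
    have h6 := hFrep ω x.1 x.2 hx1
    simp only [Prod.mk.eta] at h6
    exact hx h6.symm
  calc ∫ x, f (rmPt (N ω) x) x ∂(N ω) = ∫ x, F (N ω) x ∂(N ω) := integral_congr_ae e2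
    _ = ∫ x, Φ (ω, x) ∂(N ω) := (integral_congr_ae e1).symm
end
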